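/- arXiv:1203.0047 — 8 statements merged into one kernel-verified Lean document; each statement's English description precedes it below -/
import Mathlib

section
/- Let A ∈ ℝ^{n×n} be a Metzler matrix. Then A is Hurwitz if and only if there exists a vector ξ ∈ ℝ^n with ξ > 0 (all entries positive) such that Aξ < 0 (all entries of Aξ negative). Equivalently (applying the statement to Aᵀ), A is Hurwitz if and only if there exists z ∈ ℝ^n with z > 0 such that Aᵀz < 0. -/
open Matrix Filter

/-- A real square matrix is *Metzler* if all its off-diagonal entries are nonnegative. -/
def Matrix.Metzler {n : ℕ} (A : Matrix (Fin n) (Fin n) ℝ) : Prop :=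
  ∀ i j, i ≠ j → 0 ≤ A i j

/-- A real square matrix is *Hurwitz* if every (complex) eigenvalue has negative real part. -/
def Matrix.Hurwitz {n : ℕ} (A : Matrix (Fin n) (Fin n) ℝ) : Prop :=
  ∀ μ ∈ spectrum ℂ (A.map (Complex.ofReal)), μ.re < 0

/-- A real square matrix is *Schur stable* if every (complex) eigenvalue lies strictly
inside the unit circle. -/
def Matrix.SchurStable {n : ℕ} (A : Matrix (Fin n) (Fin n) ℝ) : Prop :=
  ∀ μ ∈ spectrum ℂ (A.map (Complex.ofReal)), ‖μ‖ < 1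


lemma exists_eigenvector {n : ℕ} {A : Matrix (Fin n) (Fin n) ℂ} {μ : ℂ}
    (h : μ ∈ spectrum ℂ A) : ∃ v : Fin n → ℂ, v ≠ 0 ∧ A *ᵥ v = μ • v := by
  rw [← AlgEquiv.spectrum_eq (Matrix.toLinAlgEquiv' (R := ℂ) (n := Fin n)) A] at h
  have h' := Module.End.hasEigenvalue_iff_mem_spectrum.mpr h
  obtain ⟨v, hv⟩ := h'.exists_hasEigenvector
  refine ⟨v, hv.right, ?_⟩
  have := hv.apply_eq_smul
  rwa [Matrix.toLinAlgEquiv'_apply] at this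

lemma hurwitz_of_pos_vec {n : ℕ} (A : Matrix (Fin n) (Fin n) ℝ)
    (hA : ∀ i j, i ≠ j → 0 ≤ A i j)
    (ξ : Fin n → ℝ) (hξ : ∀ i, 0 < ξ i) (hAξ : ∀ i, (A *ᵥ ξ) i < 0) :
    ∀ μ ∈ spectrum ℂ (A.map (Complex.ofReal)), μ.re < 0 := by
  intro μ hμ
  obtain ⟨v, hv0, hv⟩ := exists_eigenvector hμ
  rcases Nat.eq_zero_or_pos n with hn | hn
  · subst hn
    exact absurd (Subsingleton.elim v 0) hv0
  have huniv : (Finset.univ : Finset (Fin n)).Nonempty := Finset.univ_nonempty_iff.mpr ⟨⟨0, hn⟩⟩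
  obtain ⟨i, -, hi⟩ := Finset.exists_max_image Finset.univ (fun j => ‖v j‖ / ξ j) huniv
  simp only [Finset.mem_univ, forall_true_left] at hi
  have hi' : ∀ j, ‖v j‖ / ξ j ≤ ‖v i‖ / ξ i := fun j => hi j
  have hvi : 0 < ‖v i‖ := by
    obtain ⟨j, hj⟩ := Function.ne_iff.mp hv0
    have h1 : 0 < ‖v j‖ / ξ j := div_pos (by simpa using hj) (hξ j)
    have h2 : 0 < ‖v i‖ / ξ i := lt_of_lt_of_le h1 (hi' j)
    by_contra h3
    push_neg at h3
    have h4 : ‖v i‖ = 0 := le_antisymm h3 (norm_nonneg _)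
    rw [h4, zero_div] at h2
    exact lt_irrefl 0 h2
  set c : ℝ := ‖v i‖ / ξ i with hc
  have hcpos : 0 < c := div_pos hvi (hξ i)
  have hbound : ∀ j, ‖v j‖ ≤ c * ξ j := by
    intro j
    have := hi' j
    rw [div_le_div_iff₀ (hξ j) (hξ i)] at this
    rw [hc, div_mul_eq_mul_div, le_div_iff₀ (hξ i)]
    linarith [this]
  have heq : ∑ j, (A i j : ℂ) * v j = μ * v i := by
    have := congrFun hv i
    simpa [Matrix.mulVec, Matrix.map_apply, dotProduct, Pi.smul_apply, smul_eq_mul] using this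
  have hsumC : (A i i : ℂ) * v i + ∑ j ∈ Finset.univ.erase i, (A i j : ℂ) * v j
      = ∑ j, (A i j : ℂ) * v j :=
    Finset.add_sum_erase Finset.univ (fun j => (A i j : ℂ) * v j) (Finset.mem_univ i)
  have hsplit : (μ - (A i i : ℂ)) * v i = ∑ j ∈ Finset.univ.erase i, (A i j : ℂ) * v j := by
    linear_combination -heq - hsumC
  have habs : ‖μ - (A i i : ℂ)‖ * ‖v i‖
      ≤ ∑ j ∈ Finset.univ.erase i, A i j * ‖v j‖ := by
    rw [← norm_mul, hsplit]
    refine (norm_sum_le _ _).trans ?_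
    refine Finset.sum_le_sum fun j hj => ?_
    rw [norm_mul, Complex.norm_real, Real.norm_eq_abs,
      abs_of_nonneg (hA i j (Finset.ne_of_mem_erase hj).symm)]
  have hsum2 : ∑ j ∈ Finset.univ.erase i, A i j * ‖v j‖
      ≤ c * ∑ j ∈ Finset.univ.erase i, A i j * ξ j := by
    rw [Finset.mul_sum]
    refine Finset.sum_le_sum fun j hj => ?_
    have h1 := hbound j
    have h2 := hA i j (Finset.ne_of_mem_erase hj).symm
    nlinarith
  have hsumR : A i i * ξ i + ∑ j ∈ Finset.univ.erase i, A i j * ξ j = ∑ j, A i j * ξ j :=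
    Finset.add_sum_erase Finset.univ (fun j => A i j * ξ j) (Finset.mem_univ i)
  have hsum3 : ∑ j ∈ Finset.univ.erase i, A i j * ξ j < - (A i i * ξ i) := by
    have h4 := hAξ i
    rw [Matrix.mulVec, dotProduct] at h4
    linarith
  have hcx : c * ξ i = ‖v i‖ := div_mul_cancel₀ _ (hξ i).ne'
  have key : ‖μ - (A i i : ℂ)‖ * ‖v i‖
      < - A i i * ‖v i‖ := by
    have hlt : c * ∑ j ∈ Finset.univ.erase i, A i j * ξ j < c * (- (A i i * ξ i)) :=
      (mul_lt_mul_iff_right₀ hcpos).mpr hsum3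
    have hceq : c * (- (A i i * ξ i)) = - A i i * ‖v i‖ := by
      rw [← hcx]; ring
    calc ‖μ - (A i i : ℂ)‖ * ‖v i‖
        ≤ ∑ j ∈ Finset.univ.erase i, A i j * ‖v j‖ := habs
      _ ≤ c * ∑ j ∈ Finset.univ.erase i, A i j * ξ j := hsum2
      _ < c * (- (A i i * ξ i)) := hlt
      _ = - A i i * ‖v i‖ := hceq
  have key2 : ‖μ - (A i i : ℂ)‖ < - A i i := (mul_lt_mul_iff_left₀ hvi).mp key
  have hre : μ.re - A i i ≤ ‖μ - (A i i : ℂ)‖ := by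
    have := Complex.re_le_norm (μ - (A i i : ℂ))
    simpa using this
  linarith


lemma farkas_dual {n : ℕ} (hn : 0 < n) (A : Matrix (Fin n) (Fin n) ℝ)
    (h : ¬ ∃ ξ : Fin n → ℝ, (∀ i, 0 < ξ i) ∧ ∀ i, (A *ᵥ ξ) i < 0) :
    ∃ z : Fin n → ℝ, (∀ i, 0 ≤ z i) ∧ z ≠ 0 ∧ ∀ i, 0 ≤ (Aᵀ *ᵥ z) i := by
  classical
  set s : Set (Fin n → ℝ) := {w | ∀ i, w i < 0} with hs_def
  set t : Set (Fin n → ℝ) := (A.mulVec) '' {ξ | ∀ i, 0 ≤ ξ i} with ht_def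
  have hs_open : IsOpen s := by
    have : s = ⋂ i, {w : Fin n → ℝ | w i < 0} := by ext w; simp [hs_def]
    rw [this]
    exact isOpen_iInter_of_finite fun i => isOpen_lt (continuous_apply i) continuous_const
  have hs_conv : Convex ℝ s := by
    have : s = ⋂ i, {w : Fin n → ℝ | w i < 0} := by ext w; simp [hs_def]
    rw [this]
    exact convex_iInter fun i => convex_halfSpace_lt (⟨fun a b => rfl, fun c a => rfl⟩ : IsLinearMap ℝ (fun w : Fin n → ℝ => w i)) 0
  have ht_conv : Convex ℝ t := by
    have himg : t = ⇑(Matrix.mulVecLin A) '' {ξ : Fin n → ℝ | ∀ i, 0 ≤ ξ i} := rfl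
    rw [himg]
    have hKeq : {ξ : Fin n → ℝ | ∀ i, 0 ≤ ξ i} = Set.univ.pi (fun _ => Set.Ici 0) := by
      ext w; simp [Set.mem_pi, Pi.le_def]
    rw [hKeq]
    exact Convex.linear_image (convex_pi fun i _ => convex_Ici 0) (Matrix.mulVecLin A)
  have hdisj : Disjoint s t := by
    rw [Set.disjoint_left]
    rintro w hw ⟨ξ, hξ, rfl⟩
    apply h
    have huniv : (Finset.univ : Finset (Fin n)).Nonempty := Finset.univ_nonempty_iff.mpr ⟨⟨0, hn⟩⟩
    obtain ⟨i₀, -, hδ⟩ := Finset.exists_min_image Finset.univ (fun i => -(A.mulVec ξ i)) huniv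
    set δ : ℝ := -(A.mulVec ξ i₀) with hδdef
    have hδpos : 0 < δ := by simpa [hδdef] using hw i₀
    obtain ⟨j₀, -, hM⟩ := Finset.exists_max_image Finset.univ
      (fun i => |(A *ᵥ (fun _ => 1)) i|) huniv
    set M : ℝ := |(A *ᵥ (fun _ => 1)) j₀| with hMdef
    have hM0 : 0 ≤ M := abs_nonneg _
    set ε : ℝ := δ / (2 * (M + 1)) with hεdef
    have hεpos : 0 < ε := by positivity
    refine ⟨fun i => ξ i + ε, fun i => by have := hξ i; positivity, fun i => ?_⟩
    have hmv : (A *ᵥ fun i => ξ i + ε) i = A.mulVec ξ i + ε * (A *ᵥ (fun _ => 1)) i := by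
      simp only [Matrix.mulVec, dotProduct, ← Finset.sum_add_distrib, Finset.mul_sum]
      congr 1; ext j; ring
    rw [hmv]
    have h1 : A.mulVec ξ i ≤ -δ := by
      have := hδ i (Finset.mem_univ i)
      simp only [hδdef] at this ⊢
      linarith
    have h2 : |(A *ᵥ (fun _ => 1)) i| ≤ M := hM i (Finset.mem_univ i)
    have h3 : ε * (A *ᵥ (fun _ => 1)) i ≤ ε * M := by
      have := le_trans (le_abs_self _) h2
      nlinarith
    have h4 : ε * M < δ := by
      rw [hεdef, div_mul_eq_mul_div, div_lt_iff₀ (by positivity)]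
      nlinarith
    linarith
  obtain ⟨f, u, hfs, hft⟩ := geometric_hahn_banach_open hs_conv hs_open ht_conv hdisj
  set z : Fin n → ℝ := fun j => f ((Pi.single j 1 : Fin n → ℝ)) with hz_def
  have hf_eq : ∀ w : Fin n → ℝ, f w = ∑ j, w j * z j := by
    intro w
    have hw : w = ∑ j, w j • (Pi.single j 1 : Fin n → ℝ) := by
      ext i
      simp [Pi.single_apply, Finset.sum_ite_eq' Finset.univ i]
    conv_lhs => rw [hw]
    rw [map_sum]
    simp [hz_def, smul_eq_mul]
  have hu0 : 0 ≤ u := by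
    by_contra hu
    push_neg at hu
    set ε : ℝ := -u / (|f (fun _ => (-1:ℝ))| + 1) with hε
    have hεpos : 0 < ε := div_pos (by linarith) (by positivity)
    have hmem : (fun _ : Fin n => -ε) ∈ s := fun i => by simpa using hεpos
    have hlt := hfs _ hmem
    have hfe : f (fun _ : Fin n => -ε) = ε * f (fun _ => (-1:ℝ)) := by
      have heq2 : (fun _ : Fin n => -ε) = ε • (fun _ : Fin n => (-1:ℝ)) := by
        ext i; simp [smul_eq_mul]
      rw [heq2, f.map_smul, smul_eq_mul]
    rw [hfe] at hlt
    have habs : ε * f (fun _ => (-1:ℝ)) ≥ -(ε * |f (fun _ => (-1:ℝ))|) := by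
      have := neg_abs_le (f (fun _ : Fin n => (-1:ℝ)))
      nlinarith
    have hsmall : ε * |f (fun _ => (-1:ℝ))| < -u := by
      rw [hε, div_mul_eq_mul_div, div_lt_iff₀ (by positivity)]
      nlinarith [abs_nonneg (f (fun _ : Fin n => (-1:ℝ)))]
    linarith
  have hu_le : u ≤ 0 := by
    have h0t : (0 : Fin n → ℝ) ∈ t := ⟨0, fun i => le_refl 0, by simp⟩
    have := hft _ h0t
    simpa using this
  have hu : u = 0 := le_antisymm hu_le hu0
  have hz0 : ∀ j, 0 ≤ z j := by
    intro j
    by_contra hzj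
    push_neg at hzj
    set F : ℝ := |f (fun _ => (1:ℝ))| with hF
    set ε : ℝ := (-(z j)) / (2 * (F + 1)) with hε
    have hFpos : 0 ≤ F := abs_nonneg _
    have hεpos : 0 < ε := by
      apply div_pos (by linarith) (by positivity)
    have hmem : (fun i => -((Pi.single j 1 : Fin n → ℝ) i) - ε) ∈ s := by
      intro i
      rcases eq_or_ne i j with rfl | hij
      · simp only [Pi.single_eq_same]; linarith
      · simp only [Pi.single_eq_of_ne hij]; linarith
    have hlt := hfs _ hmem
    rw [hu] at hlt
    have hdecomp : (fun i => -((Pi.single j 1 : Fin n → ℝ) i) - ε)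
        = (-1 : ℝ) • (Pi.single j 1 : Fin n → ℝ) + (-ε) • (fun _ : Fin n => (1:ℝ)) := by
      ext i; simp [smul_eq_mul]; ring
    rw [hdecomp, f.map_add, f.map_smul, f.map_smul] at hlt
    simp only [smul_eq_mul] at hlt
    have h1 : f (fun _ : Fin n => (1:ℝ)) ≤ F := le_abs_self _
    have h2 : ε * F < -(z j) := by
      rw [hε, div_mul_eq_mul_div, div_lt_iff₀ (by positivity)]
      nlinarith
    have hfz : f ((Pi.single j 1 : Fin n → ℝ)) = z j := rfl
    rw [hfz] at hlt
    nlinarith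
  have hzne : z ≠ 0 := by
    intro h0
    have hmem : (fun _ : Fin n => (-1:ℝ)) ∈ s := fun i => by norm_num
    have hlt := hfs _ hmem
    rw [hu, hf_eq] at hlt
    rw [h0] at hlt
    simp at hlt
  refine ⟨z, hz0, hzne, fun i => ?_⟩
  have hsingle_mem : (Pi.single i 1 : Fin n → ℝ) ∈ {ξ : Fin n → ℝ | ∀ k, 0 ≤ ξ k} := by
    intro k
    rcases eq_or_ne k i with rfl | hk
    · simp
    · simp [Pi.single_eq_of_ne hk]
  have hmem : A *ᵥ (Pi.single i 1 : Fin n → ℝ) ∈ t := ⟨(Pi.single i 1 : Fin n → ℝ), hsingle_mem, rfl⟩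
  have hge := hft _ hmem
  rw [hu, hf_eq] at hge
  have hAv : A *ᵥ (Pi.single i 1 : Fin n → ℝ) = fun j => A j i := by
    rw [Matrix.mulVec_single]
    ext j; simp
  rw [hAv] at hge
  have heq3 : (Aᵀ *ᵥ z) i = ∑ j, A j i * z j := by
    simp [Matrix.mulVec, dotProduct, Matrix.transpose_apply]
  linarith [heq3 ▸ hge]


lemma map_matrix_pow {n : ℕ} (C : Matrix (Fin n) (Fin n) ℝ) (k : ℕ) :
    (C.map Complex.ofReal) ^ k = (C ^ k).map Complex.ofReal := by
  have h1 : ∀ M : Matrix (Fin n) (Fin n) ℝ,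
      M.map Complex.ofReal = Complex.ofRealHom.mapMatrix M := fun M => rfl
  rw [h1, h1, ← map_pow]

lemma euclid_coord_le {n : ℕ} (v : EuclideanSpace ℂ (Fin n)) (i : Fin n) : ‖v i‖ ≤ ‖v‖ := by
  rw [EuclideanSpace.norm_eq]
  rw [show (‖v i‖) = Real.sqrt (‖v i‖ ^ 2) from (Real.sqrt_sq (norm_nonneg _)).symm]
  apply Real.sqrt_le_sqrt
  exact Finset.single_le_sum (f := fun j => ‖v j‖ ^ 2)
    (fun j _ => sq_nonneg _) (Finset.mem_univ i)

lemma entries_small_of_schur {n : ℕ} (hn : 0 < n) (C : Matrix (Fin n) (Fin n) ℝ)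
    (hC : ∀ μ ∈ spectrum ℂ (C.map Complex.ofReal), ‖μ‖ < 1)
    {ε : ℝ} (hε : 0 < ε) : ∃ k : ℕ, ∀ i j, |(C ^ k) i j| < ε := by
  haveI : Nonempty (Fin n) := ⟨⟨0, hn⟩⟩
  haveI : Nontrivial (EuclideanSpace ℂ (Fin n)) := inferInstance
  set a : EuclideanSpace ℂ (Fin n) →L[ℂ] EuclideanSpace ℂ (Fin n) :=
    Matrix.toEuclideanCLM (𝕜 := ℂ) (n := Fin n) (C.map Complex.ofReal) with ha_def
  have hspec : spectrum ℂ a = spectrum ℂ (C.map Complex.ofReal) :=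
    AlgEquiv.spectrum_eq (Matrix.toEuclideanCLM (𝕜 := ℂ) (n := Fin n)) _
  have hρ : spectralRadius ℂ a < 1 := by
    have := spectrum.spectralRadius_lt_of_forall_lt a (r := 1) ?_
    · simpa using this
    · intro z hz
      rw [hspec] at hz
      have := hC z hz
      rwa [← NNReal.coe_lt_coe, coe_nnnorm, NNReal.coe_one]
  obtain ⟨r, hr1, hr2⟩ := ENNReal.lt_iff_exists_nnreal_btwn.mp hρ
  have hrlt1 : (r : ℝ) < 1 := by exact_mod_cast hr2
  have hr0 : (0:ℝ) ≤ r := r.coe_nonneg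
  have hgelfand := spectrum.pow_nnnorm_pow_one_div_tendsto_nhds_spectralRadius a
  have hev1 : ∀ᶠ k : ℕ in atTop, (‖a ^ k‖₊ : ENNReal) ^ (1 / (k:ℝ)) < (r : ENNReal) :=
    hgelfand.eventually_lt_const hr1
  have hev2 : ∀ᶠ k : ℕ in atTop, (r:ℝ) ^ k < ε := by
    have := tendsto_pow_atTop_nhds_zero_of_lt_one hr0 hrlt1
    exact this.eventually_lt_const hε
  obtain ⟨k, hkk⟩ := ((hev1.and hev2).and (eventually_ge_atTop 1)).exists
  obtain ⟨⟨hk1, hk2⟩, hk3⟩ := hkk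
  have hkne : (k:ℝ) ≠ 0 := by positivity
  -- raise to power k
  have h2 : ((‖a ^ k‖₊ : ENNReal) ^ (1 / (k:ℝ))) ^ (k:ℝ) < (r : ENNReal) ^ (k:ℝ) := by
    apply ENNReal.rpow_lt_rpow hk1
    positivity
  rw [← ENNReal.rpow_mul, one_div, inv_mul_cancel₀ hkne, ENNReal.rpow_one] at h2
  have h3 : (‖a ^ k‖₊ : ENNReal) < ((r ^ k : NNReal) : ENNReal) := by
    rwa [ENNReal.coe_pow, ← ENNReal.rpow_natCast]
  have h4 : ‖a ^ k‖ < (r:ℝ) ^ k := by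
    have := ENNReal.coe_lt_coe.mp h3
    exact_mod_cast this
  refine ⟨k, fun i j => ?_⟩
  -- express entry via the CLM
  have hpow : a ^ k = Matrix.toEuclideanCLM (𝕜 := ℂ) (n := Fin n) ((C ^ k).map Complex.ofReal) := by
    rw [ha_def, ← map_pow, map_matrix_pow]
  set x : EuclideanSpace ℂ (Fin n) := (WithLp.equiv 2 _).symm (Pi.single j 1) with hx_def
  have hxnorm : ‖x‖ = 1 := by
    rw [show x = EuclideanSpace.single j (1:ℂ) from rfl, EuclideanSpace.norm_single, norm_one]
  have happly : (a ^ k) x = (WithLp.equiv 2 _).symm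
      (Matrix.toLin' ((C ^ k).map Complex.ofReal) (Pi.single j 1)) := by
    rw [hpow, hx_def]; rfl
  have hentry : ((a ^ k) x : EuclideanSpace ℂ (Fin n)) i = (((C ^ k) i j : ℝ) : ℂ) := by
    rw [happly]
    show (Matrix.toLin' ((C ^ k).map Complex.ofReal) (Pi.single j 1)) i = _
    rw [Matrix.toLin'_apply, Matrix.mulVec_single]
    simp [Matrix.map_apply]
  have hb1 : |(C ^ k) i j| ≤ ‖(a ^ k) x‖ := by
    have := euclid_coord_le ((a ^ k) x) i
    rw [hentry] at this
    simpa using this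
  have hb2 : ‖(a ^ k) x‖ ≤ ‖a ^ k‖ := by
    calc ‖(a ^ k) x‖ ≤ ‖a ^ k‖ * ‖x‖ := (a ^ k).le_opNorm x
      _ = ‖a ^ k‖ := by rw [hxnorm, mul_one]
  calc |(C ^ k) i j| ≤ ‖(a ^ k) x‖ := hb1
    _ ≤ ‖a ^ k‖ := hb2
    _ < (r:ℝ) ^ k := h4
    _ < ε := hk2



lemma exists_pos_vec_of_hurwitz {n : ℕ} (A : Matrix (Fin n) (Fin n) ℝ)
    (hA : ∀ i j, i ≠ j → 0 ≤ A i j)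
    (hH : ∀ μ ∈ spectrum ℂ (A.map Complex.ofReal), μ.re < 0) :
    ∃ ξ : Fin n → ℝ, (∀ i, 0 < ξ i) ∧ ∀ i, (A *ᵥ ξ) i < 0 := by
  classical
  by_contra h
  rcases Nat.eq_zero_or_pos n with hn | hn
  · subst hn
    exact h ⟨fun _ => 1, fun i => Fin.elim0 i, fun i => Fin.elim0 i⟩
  obtain ⟨z, hz0, hzne, hATz⟩ := farkas_dual hn A h
  -- choose the scaling s
  have hfin : (spectrum ℂ (A.map Complex.ofReal)).Finite := Matrix.finite_spectrum _
  set g : ℂ → ℝ := fun μ => (μ.re * μ.re + μ.im * μ.im) / (2 * (-μ.re)) with hg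
  obtain ⟨c, hc⟩ := (hfin.image g).bddAbove
  have hcbound : ∀ μ ∈ spectrum ℂ (A.map Complex.ofReal), g μ ≤ c := fun μ hμ =>
    hc (Set.mem_image_of_mem g hμ)
  have huniv : (Finset.univ : Finset (Fin n)).Nonempty := Finset.univ_nonempty_iff.mpr ⟨⟨0, hn⟩⟩
  obtain ⟨i₁, -, hd⟩ := Finset.exists_max_image Finset.univ (fun i => -(A i i)) huniv
  set d : ℝ := -(A i₁ i₁) with hddef
  set s : ℝ := max (max c d) 0 + 1 with hsdef
  have hspos : 0 < s := by
    have := le_max_right (max c d) 0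
    rw [hsdef]; linarith
  have hsc : c < s := by
    have h1 := le_max_left c d
    have h2 := le_max_left (max c d) 0
    rw [hsdef]; linarith
  have hsd : ∀ i, -(A i i) ≤ s - 1 := by
    intro i
    have h1 := hd i (Finset.mem_univ i)
    have h2 := le_max_right c d
    have h3 := le_max_left (max c d) 0
    rw [hsdef]
    simp only [hddef] at h1
    linarith
  set C : Matrix (Fin n) (Fin n) ℝ := 1 + s⁻¹ • A with hCdef
  -- C is entrywise nonnegative
  have hCnn : ∀ i j, 0 ≤ C i j := by
    intro i j
    rw [hCdef]
    rcases eq_or_ne i j with rfl | hij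
    · simp only [Matrix.add_apply, Matrix.one_apply_eq, Matrix.smul_apply, smul_eq_mul]
      have h1 := hsd i
      have h2 : A i i / s ≥ -1 := by
        rw [ge_iff_le, neg_le, ← neg_div, div_le_one hspos]
        linarith
      rw [div_eq_inv_mul] at h2
      linarith
    · simp only [Matrix.add_apply, Matrix.one_apply_ne hij, Matrix.smul_apply, smul_eq_mul,
        zero_add]
      have := hA i j hij
      positivity
  -- C is Schur stable
  have hmap : C.map Complex.ofReal = 1 + ((s : ℂ))⁻¹ • (A.map Complex.ofReal) := by
    ext i j
    rcases eq_or_ne i j with rfl | hij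
    · simp only [hCdef, Matrix.map_apply, Matrix.add_apply, Matrix.one_apply_eq,
        Matrix.smul_apply, smul_eq_mul]
      push_cast
      ring
    · simp only [hCdef, Matrix.map_apply, Matrix.add_apply, Matrix.one_apply_ne hij,
        Matrix.smul_apply, smul_eq_mul]
      push_cast
      ring
  have hsne : ((s : ℂ)) ≠ 0 := by
    simp only [ne_eq, Complex.ofReal_eq_zero]
    exact hspos.ne'
  have hsinvne : ((s : ℂ))⁻¹ ≠ 0 := inv_ne_zero hsne
  have hCschur : ∀ μ ∈ spectrum ℂ (C.map Complex.ofReal), ‖μ‖ < 1 := by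
    intro μ hμ
    rw [hmap] at hμ
    have hone : (1 : Matrix (Fin n) (Fin n) ℂ) = algebraMap ℂ _ (1 : ℂ) := (_root_.map_one (algebraMap ℂ (Matrix (Fin n) (Fin n) ℂ))).symm
    rw [hone, ← spectrum.singleton_add_eq] at hμ
    set u : ℂˣ := Units.mk0 _ hsinvne with hu
    have husmul : ((s : ℂ))⁻¹ • (A.map Complex.ofReal) = u • (A.map Complex.ofReal) := rfl
    rw [husmul, spectrum.unit_smul_eq_smul] at hμ
    obtain ⟨x, hx, y, hy, hxy⟩ := Set.mem_add.mp hμ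
    rw [Set.mem_singleton_iff] at hx
    obtain ⟨ν, hν, hνy⟩ := hy
    have hμ_eq : μ = 1 + ((s : ℂ))⁻¹ * ν := by
      rw [← hxy, hx, ← hνy]
      simp [hu, Units.smul_def, smul_eq_mul]
    have hre : ν.re < 0 := hH ν hν
    have hkey : ν.re * ν.re + ν.im * ν.im < 2 * s * (-ν.re) := by
      have h1 := hcbound ν hν
      rw [hg] at h1
      simp only at h1
      have h2 : 0 < 2 * (-ν.re) := by linarith
      rw [div_le_iff₀ h2] at h1
      nlinarith
    -- compute |μ|
    have hτ : (0:ℝ) < s⁻¹ := inv_pos.mpr hspos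
    have hστ : s * s⁻¹ = 1 := mul_inv_cancel₀ hspos.ne'
    have hre_eq : μ.re = 1 + s⁻¹ * ν.re := by
      rw [hμ_eq]
      simp only [Complex.add_re, Complex.one_re]
      rw [show ((s:ℂ))⁻¹ = ((s⁻¹ : ℝ) : ℂ) by push_cast; ring]
      rw [Complex.re_ofReal_mul]
    have him_eq : μ.im = s⁻¹ * ν.im := by
      rw [hμ_eq]
      simp only [Complex.add_im, Complex.one_im]
      rw [show ((s:ℂ))⁻¹ = ((s⁻¹ : ℝ) : ℂ) by push_cast; ring]
      rw [Complex.im_ofReal_mul]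
      ring
    have hnsq : Complex.normSq μ < 1 := by
      rw [Complex.normSq_apply, hre_eq, him_eq]
      have hmul := mul_lt_mul_of_pos_left hkey (mul_pos hτ hτ)
      have hsimp : s⁻¹ * s⁻¹ * (2 * s * (-ν.re)) = 2 * s⁻¹ * (-ν.re) := by
        field_simp
      rw [hsimp] at hmul
      nlinarith [hmul]
    rw [Complex.norm_def]
    calc Real.sqrt (Complex.normSq μ) < Real.sqrt 1 :=
      Real.sqrt_lt_sqrt (Complex.normSq_nonneg μ) hnsq
      _ = 1 := Real.sqrt_one
  -- (Cᵀ)^k z ≥ z for all k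
  have hCz : ∀ i, z i ≤ (Cᵀ *ᵥ z) i := by
    intro i
    have : Cᵀ *ᵥ z = z + s⁻¹ • (Aᵀ *ᵥ z) := by
      rw [hCdef, Matrix.transpose_add, Matrix.transpose_one, Matrix.transpose_smul,
        Matrix.add_mulVec, Matrix.one_mulVec, Matrix.smul_mulVec]
    rw [this]
    simp only [Pi.add_apply, Pi.smul_apply, smul_eq_mul]
    have h1 := hATz i
    have h2 : (0:ℝ) ≤ s⁻¹ := le_of_lt (inv_pos.mpr hspos)
    nlinarith
  have hpows : ∀ k : ℕ, ∀ i, z i ≤ (((C ^ k)ᵀ) *ᵥ z) i := by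
    intro k
    induction k with
    | zero => intro i; simp [Matrix.one_mulVec]
    | succ k ih =>
      intro i
      have hsucc : (C ^ (k+1))ᵀ = Cᵀ * (C ^ k)ᵀ := by
        rw [pow_succ, Matrix.transpose_mul]
      rw [hsucc, ← Matrix.mulVec_mulVec]
      set w : Fin n → ℝ := (C ^ k)ᵀ *ᵥ z with hw
      have hwz : ∀ j, z j ≤ w j := ih
      calc z i ≤ (Cᵀ *ᵥ z) i := hCz i
        _ ≤ (Cᵀ *ᵥ w) i := by
          simp only [Matrix.mulVec, dotProduct, Matrix.transpose_apply]
          refine Finset.sum_le_sum fun j _ => ?_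
          have h1 := hCnn j i
          have h2 := hwz j
          have h3 : 0 ≤ z j := hz0 j
          nlinarith
  -- contradiction with entries_small
  obtain ⟨i₀, hi₀⟩ := Function.ne_iff.mp hzne
  have hzi₀ : 0 < z i₀ := lt_of_le_of_ne (hz0 i₀) (Ne.symm (by simpa using hi₀))
  set S : ℝ := ∑ j, z j with hS
  have hS0 : 0 ≤ S := Finset.sum_nonneg fun j _ => hz0 j
  set ε : ℝ := z i₀ / (2 * (S + 1)) with hε
  have hεpos : 0 < ε := by positivity
  obtain ⟨k, hk⟩ := entries_small_of_schur hn C hCschur hεpos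
  have hup : (((C ^ k)ᵀ) *ᵥ z) i₀ ≤ ε * S := by
    simp only [Matrix.mulVec, dotProduct, Matrix.transpose_apply, hS, Finset.mul_sum]
    refine Finset.sum_le_sum fun j _ => ?_
    have h1 := hk j i₀
    have h2 := hz0 j
    have h3 : (C ^ k) j i₀ ≤ ε := le_of_lt (lt_of_le_of_lt (le_abs_self _) h1)
    nlinarith
  have hlow := hpows k i₀
  have : z i₀ ≤ ε * S := le_trans hlow hup
  rw [hε] at this
  rw [div_mul_eq_mul_div, le_div_iff₀ (by positivity)] at this
  nlinarith

lemma spectrum_transpose {n : ℕ} (M : Matrix (Fin n) (Fin n) ℂ) :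
    spectrum ℂ Mᵀ = spectrum ℂ M := by
  ext μ
  rw [spectrum.mem_iff, spectrum.mem_iff]
  have htr : algebraMap ℂ (Matrix (Fin n) (Fin n) ℂ) μ - Mᵀ
      = (algebraMap ℂ (Matrix (Fin n) (Fin n) ℂ) μ - M)ᵀ := by
    rw [Matrix.transpose_sub]
    congr 1
    rw [show (algebraMap ℂ (Matrix (Fin n) (Fin n) ℂ)) μ = μ • (1 : Matrix (Fin n) (Fin n) ℂ)
      from Algebra.algebraMap_eq_smul_one μ]
    rw [Matrix.transpose_smul, Matrix.transpose_one]
  rw [htr]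
  rw [Matrix.isUnit_iff_isUnit_det, Matrix.isUnit_iff_isUnit_det, Matrix.det_transpose]

lemma hurwitz_transpose_iff {n : ℕ} (A : Matrix (Fin n) (Fin n) ℝ) :
    A.Hurwitz ↔ (Aᵀ).Hurwitz := by
  unfold Matrix.Hurwitz
  have hmapT : (Aᵀ).map Complex.ofReal = (A.map Complex.ofReal)ᵀ := rfl
  rw [hmapT, spectrum_transpose]

lemma main_iff {n : ℕ} (A : Matrix (Fin n) (Fin n) ℝ) (hA : A.Metzler) :
    A.Hurwitz ↔ ∃ ξ : Fin n → ℝ, (∀ i, 0 < ξ i) ∧ ∀ i, (A *ᵥ ξ) i < 0 := by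
  constructor
  · exact fun hH => exists_pos_vec_of_hurwitz A hA hH
  · rintro ⟨ξ, hξ, hAξ⟩
    exact hurwitz_of_pos_vec A hA ξ hξ hAξ

/-- A Metzler matrix `A` is Hurwitz iff there is an entrywise positive vector `ξ` with
`Aξ < 0` entrywise; equivalently (applying this to `Aᵀ`), iff there is an entrywise
positive `z` with `Aᵀz < 0` entrywise. -/
theorem metzler_hurwitz_iff_exists_pos_vec {n : ℕ} (A : Matrix (Fin n) (Fin n) ℝ)
    (hA : A.Metzler) :
    (A.Hurwitz ↔ ∃ ξ : Fin n → ℝ, (∀ i, 0 < ξ i) ∧ ∀ i, (A *ᵥ ξ) i < 0) ∧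
    (A.Hurwitz ↔ ∃ z : Fin n → ℝ, (∀ i, 0 < z i) ∧ ∀ i, (Aᵀ *ᵥ z) i < 0) := by
  have hAT : (Aᵀ).Metzler := fun i j hij => hA j i (fun h => hij (h.symm)) 
  refine ⟨main_iff A hA, ?_⟩
  rw [hurwitz_transpose_iff A]
  exact main_iff Aᵀ hAT
end

section
/- Let A ∈ ℝ^{n×n} be a Metzler matrix. Then A is Hurwitz if and only if A is invertible and −A⁻¹ has all entries nonnegative. -/
open Matrix

namespace MetzlerAux

variable {n : ℕ}

lemma pow_entry_nonneg {X : Matrix (Fin n) (Fin n) ℝ} (hX : ∀ i j, 0 ≤ X i j) :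
    ∀ (k : ℕ) (i j : Fin n), 0 ≤ (X ^ k) i j := by
  intro k
  induction k with
  | zero =>
      intro i j
      simp only [pow_zero, Matrix.one_apply]
      split <;> norm_num
  | succ k ih =>
      intro i j
      rw [pow_succ, Matrix.mul_apply]
      exact Finset.sum_nonneg fun l _ => mul_nonneg (ih i l) (hX l j)

lemma pow_rowsum_le {X : Matrix (Fin n) (Fin n) ℝ} (hX : ∀ i j, 0 ≤ X i j)
    {r : ℝ} (hr0 : 0 ≤ r) (hrow : ∀ i, ∑ j, X i j ≤ r) :
    ∀ (k : ℕ) (i : Fin n), ∑ j, (X ^ k) i j ≤ r ^ k := by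
  intro k
  induction k with
  | zero =>
      intro i
      simp only [pow_zero, Matrix.one_apply]
      rw [Finset.sum_ite_eq Finset.univ i (fun _ => (1:ℝ))]
      simp
  | succ k ih =>
      intro i
      have h1 : ∑ j, (X ^ (k+1)) i j = ∑ l, X i l * (∑ j, (X ^ k) l j) := by
        rw [pow_succ']
        simp only [Matrix.mul_apply]
        rw [Finset.sum_comm]
        simp [Finset.mul_sum]
      rw [h1, pow_succ]
      have h2 : ∑ l, X i l * (∑ j, (X ^ k) l j) ≤ ∑ l, X i l * r ^ k := by
        refine Finset.sum_le_sum fun l _ => ?_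
        exact mul_le_mul_of_nonneg_left (ih l) (hX i l)
      refine h2.trans ?_
      rw [← Finset.sum_mul]
      rw [mul_comm (r ^ k) r]
      exact mul_le_mul_of_nonneg_right (hrow i) (pow_nonneg hr0 k)

lemma pow_entry_le {X : Matrix (Fin n) (Fin n) ℝ} (hX : ∀ i j, 0 ≤ X i j)
    {r : ℝ} (hr0 : 0 ≤ r) (hrow : ∀ i, ∑ j, X i j ≤ r) (k : ℕ) (i j : Fin n) :
    (X ^ k) i j ≤ r ^ k := by
  refine le_trans ?_ (pow_rowsum_le hX hr0 hrow k i)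
  exact Finset.single_le_sum (f := fun j => (X ^ k) i j)
    (fun l _ => pow_entry_nonneg hX k i l) (Finset.mem_univ j)

/-- Entrywise-nonnegative Neumann series: if `X ≥ 0` has row sums at most `r < 1`,
then `1 - X` is invertible with entrywise nonnegative inverse. -/
lemma neumann {X : Matrix (Fin n) (Fin n) ℝ} (hX : ∀ i j, 0 ≤ X i j)
    {r : ℝ} (hr0 : 0 ≤ r) (hr1 : r < 1) (hrow : ∀ i, ∑ j, X i j ≤ r) :
    IsUnit (1 - X).det ∧ ∀ i j, 0 ≤ (1 - X)⁻¹ i j := by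
  have hsum : ∀ (i j : Fin n), Summable (fun k : ℕ => (X ^ k) i j) := by
    intro i j
    refine Summable.of_nonneg_of_le (fun k => pow_entry_nonneg hX k i j)
      (fun k => pow_entry_le hX hr0 hrow k i j) (summable_geometric_of_lt_one hr0 hr1)
  set T : Matrix (Fin n) (Fin n) ℝ := Matrix.of (fun i j => ∑' k : ℕ, (X ^ k) i j) with hT
  have hmul : (1 - X) * T = 1 := by
    ext i j
    rw [Matrix.sub_mul, Matrix.one_mul, Matrix.sub_apply]
    have hXT : (X * T) i j = ∑' k : ℕ, (X ^ (k+1)) i j := by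
      rw [Matrix.mul_apply]
      have h1 : ∀ l : Fin n, X i l * T l j = ∑' k : ℕ, X i l * (X ^ k) l j := by
        intro l
        rw [hT]
        simp only [Matrix.of_apply]
        exact (tsum_mul_left).symm
      calc ∑ l, X i l * T l j = ∑ l, ∑' k : ℕ, X i l * (X ^ k) l j := by
            exact Finset.sum_congr rfl fun l _ => h1 l
        _ = ∑' k : ℕ, ∑ l, X i l * (X ^ k) l j := by
            rw [Summable.tsum_finsetSum (fun l _ => (hsum l j).mul_left (X i l))]
        _ = ∑' k : ℕ, (X ^ (k+1)) i j := by
            refine tsum_congr fun k => ?_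
            rw [pow_succ', Matrix.mul_apply]
    have hTij : T i j = (X ^ 0) i j + ∑' k : ℕ, (X ^ (k+1)) i j := by
      rw [hT]; simp only [Matrix.of_apply]
      exact Summable.tsum_eq_zero_add (hsum i j)
    rw [hXT, hTij]
    simp [Matrix.one_apply]
  have hunit : IsUnit (1 - X).det := by
    have := congrArg Matrix.det hmul
    rw [Matrix.det_mul, Matrix.det_one] at this
    exact IsUnit.of_mul_eq_one _ this
  refine ⟨hunit, ?_⟩
  rw [Matrix.inv_eq_right_inv hmul]
  intro i j
  exact tsum_nonneg (fun k => pow_entry_nonneg hX k i j)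

/-- The resolvent step: if `(τ•1 - A)⁻¹` is nonnegative and `τ - σ` is small enough,
then `(σ•1 - A)⁻¹` is nonnegative. -/
lemma step {A : Matrix (Fin n) (Fin n) ℝ} {σ τ : ℝ} (hστ : σ ≤ τ)
    (hτdet : IsUnit (τ • (1 : Matrix (Fin n) (Fin n) ℝ) - A).det)
    (hτpos : ∀ i j, 0 ≤ (τ • (1 : Matrix (Fin n) (Fin n) ℝ) - A)⁻¹ i j)
    {r : ℝ} (hr0 : 0 ≤ r) (hr1 : r < 1)
    (hrow : ∀ i, ∑ j, (τ - σ) * (τ • (1 : Matrix (Fin n) (Fin n) ℝ) - A)⁻¹ i j ≤ r) :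
    ∀ i j, 0 ≤ (σ • (1 : Matrix (Fin n) (Fin n) ℝ) - A)⁻¹ i j := by
  set G : Matrix (Fin n) (Fin n) ℝ := τ • (1 : Matrix (Fin n) (Fin n) ℝ) - A with hG
  set X : Matrix (Fin n) (Fin n) ℝ := (τ - σ) • G⁻¹ with hX
  have hXnn : ∀ i j, 0 ≤ X i j := by
    intro i j
    rw [hX, Matrix.smul_apply]
    exact mul_nonneg (by linarith) (hτpos i j)
  have hXrow : ∀ i, ∑ j, X i j ≤ r := by
    intro i
    simpa [hX, Matrix.smul_apply, smul_eq_mul] using hrow i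
  obtain ⟨hU, hpos⟩ := neumann hXnn hr0 hr1 hXrow
  have hid : σ • (1 : Matrix (Fin n) (Fin n) ℝ) - A = G * (1 - X) := by
    rw [Matrix.mul_sub, Matrix.mul_one, hX, Matrix.mul_smul,
      Matrix.mul_nonsing_inv _ hτdet, hG]
    rw [sub_smul]
    abel
  rw [hid, Matrix.mul_inv_rev]
  intro i j
  rw [Matrix.mul_apply]
  exact Finset.sum_nonneg fun l _ => mul_nonneg (hpos i l) (hτpos l j)

lemma mulVec_apply' {R : Type*} [CommRing R] (M : Matrix (Fin n) (Fin n) R) (v : Fin n → R)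
    (i : Fin n) : (M *ᵥ v) i = ∑ j, M i j * v j := rfl

lemma sum_ite_mul' {R : Type*} [CommRing R] (j : Fin n) (c : R) (y : Fin n → R) :
    ∑ l, (if j = l then c else 0) * y l = c * y j := by
  simp [ite_mul, Finset.sum_ite_eq]

end MetzlerAux

set_option maxHeartbeats 1000000 in
open MetzlerAux in
/-- A Metzler matrix `A` is Hurwitz iff `A` is invertible and `-A⁻¹` has nonnegative
entries. -/
theorem metzler_hurwitz_iff_neg_inv_nonneg {n : ℕ} (A : Matrix (Fin n) (Fin n) ℝ)
    (hA : A.Metzler) :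
    A.Hurwitz ↔ IsUnit A.det ∧ ∀ i j, 0 ≤ (-A⁻¹) i j := by
  -- common setup: a shift making `A + c • 1` nonnegative
  set Sabs : ℝ := ∑ i, ∑ j, |A i j| with hSabs
  have hSabs0 : 0 ≤ Sabs := Finset.sum_nonneg fun i _ =>
    Finset.sum_nonneg fun j _ => abs_nonneg _
  have habs : ∀ i j, |A i j| ≤ Sabs := by
    intro i j
    refine le_trans (Finset.single_le_sum (f := fun j => |A i j|)
      (fun l _ => abs_nonneg _) (Finset.mem_univ j)) ?_
    exact Finset.single_le_sum (f := fun i => ∑ j, |A i j|)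
      (fun l _ => Finset.sum_nonneg fun j _ => abs_nonneg _) (Finset.mem_univ i)
  set c : ℝ := 1 + Sabs with hc
  have hc1 : 1 ≤ c := by rw [hc]; linarith
  set B : Matrix (Fin n) (Fin n) ℝ := A + c • 1 with hB
  have hBapp : ∀ i j, B i j = A i j + (if i = j then c else 0) := by
    intro i j
    simp [hB, Matrix.add_apply, Matrix.smul_apply, Matrix.one_apply, mul_ite]
  have hBnn : ∀ i j, 0 ≤ B i j := by
    intro i j
    rw [hBapp]
    by_cases hij : i = j
    · rw [if_pos hij]
      have h1 := habs i i
      have h2 := neg_abs_le (A i i)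
      subst hij
      rw [hc]
      linarith
    · rw [if_neg hij, add_zero]
      exact hA i j hij
  constructor
  · -- forward direction
    intro h
    have hdetpos : ∀ σ : ℝ, 0 ≤ σ →
        IsUnit (σ • (1 : Matrix (Fin n) (Fin n) ℝ) - A).det := by
      intro σ hσ
      rw [isUnit_iff_ne_zero]
      intro h0
      have hmap : ((σ • (1 : Matrix (Fin n) (Fin n) ℝ) - A).map Complex.ofReal)
          = (σ : ℂ) • (1 : Matrix (Fin n) (Fin n) ℂ) - A.map Complex.ofReal := by
        ext i j
        by_cases hij : i = j <;>
          simp [hij, Matrix.map_apply, Matrix.sub_apply, Matrix.smul_apply, Matrix.one_apply]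
      have hdetC : ((σ : ℂ) • (1 : Matrix (Fin n) (Fin n) ℂ) - A.map Complex.ofReal).det = 0 := by
        rw [← hmap]
        have hrh := (Complex.ofRealHom : ℝ →+* ℂ).map_det
          (σ • (1 : Matrix (Fin n) (Fin n) ℝ) - A)
        rw [RingHom.mapMatrix_apply] at hrh
        have hcoe : (σ • (1 : Matrix (Fin n) (Fin n) ℝ) - A).map (Complex.ofRealHom : ℝ →+* ℂ)
            = (σ • (1 : Matrix (Fin n) (Fin n) ℝ) - A).map Complex.ofReal := rfl
        rw [hcoe] at hrh
        rw [← hrh, h0]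
        simp
      have hmem : (σ : ℂ) ∈ spectrum ℂ (A.map Complex.ofReal) := by
        rw [spectrum.mem_iff]
        intro hu
        rw [Matrix.isUnit_iff_isUnit_det, Algebra.algebraMap_eq_smul_one] at hu
        rw [hdetC] at hu
        exact (isUnit_iff_ne_zero.mp hu) rfl
      have := h _ hmem
      rw [Complex.ofReal_re] at this
      linarith
    -- the base point
    set sB : ℝ := ∑ i, ∑ j, B i j with hsB
    have hsB0 : 0 ≤ sB := Finset.sum_nonneg fun i _ =>
      Finset.sum_nonneg fun j _ => hBnn i j
    set t : ℝ := 1 + c + sB with ht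
    have ht0 : 0 < t := by simp only [ht]; linarith
    set s₀ : ℝ := 1 + sB with hs₀
    have hs₀0 : 0 ≤ s₀ := by simp only [hs₀]; linarith
    have hs₀c : s₀ = t - c := by simp only [ht, hs₀]; ring
    -- base case: (s₀ • 1 - A)⁻¹ ≥ 0
    have base : ∀ i j, 0 ≤ (s₀ • (1 : Matrix (Fin n) (Fin n) ℝ) - A)⁻¹ i j := by
      set X : Matrix (Fin n) (Fin n) ℝ := t⁻¹ • B with hX
      have hXnn : ∀ i j, 0 ≤ X i j := fun i j =>
        mul_nonneg (inv_nonneg.mpr ht0.le) (hBnn i j)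
      set r : ℝ := sB / t with hr
      have hr0 : 0 ≤ r := div_nonneg hsB0 ht0.le
      have hr1 : r < 1 := by
        rw [hr, div_lt_one ht0]
        simp only [ht]; linarith
      have hrow : ∀ i, ∑ j, X i j ≤ r := by
        intro i
        have h1 : ∑ j, X i j = t⁻¹ * ∑ j, B i j := by
          simp [hX, Matrix.smul_apply, Finset.mul_sum]
        have h2 : ∑ j, B i j ≤ sB := by
          refine Finset.single_le_sum (f := fun i => ∑ j, B i j)
            (fun l _ => Finset.sum_nonneg fun j _ => hBnn l j) (Finset.mem_univ i)
        rw [h1, hr, div_eq_inv_mul]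
        exact mul_le_mul_of_nonneg_left h2 (inv_nonneg.mpr ht0.le)
      obtain ⟨hU, hpos⟩ := neumann hXnn hr0 hr1 hrow
      have hid : s₀ • (1 : Matrix (Fin n) (Fin n) ℝ) - A = t • ((1 : Matrix (Fin n) (Fin n) ℝ) - X) := by
        rw [smul_sub, hX, smul_smul, mul_inv_cancel₀ ht0.ne', one_smul, hB, hs₀c, sub_smul]
        abel
      have hinv : (s₀ • (1 : Matrix (Fin n) (Fin n) ℝ) - A)⁻¹
          = t⁻¹ • ((1 : Matrix (Fin n) (Fin n) ℝ) - X)⁻¹ := by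
        apply Matrix.inv_eq_right_inv
        rw [hid, Matrix.smul_mul, Matrix.mul_smul, smul_smul, mul_inv_cancel₀ ht0.ne', one_smul,
          Matrix.mul_nonsing_inv _ hU]
      intro i j
      rw [hinv, Matrix.smul_apply, smul_eq_mul]
      exact mul_nonneg (inv_nonneg.mpr ht0.le) (hpos i j)
    -- compactness bound on the resolvent over [0, s₀]
    have hg : Continuous (fun σ : ℝ => σ • (1 : Matrix (Fin n) (Fin n) ℝ) - A) :=
      (continuous_id.smul continuous_const).sub continuous_const
    have hd : Continuous (fun σ : ℝ => (σ • (1 : Matrix (Fin n) (Fin n) ℝ) - A).det) :=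
      hg.matrix_det
    set S : Set ℝ := Set.Icc 0 s₀ with hS
    have hdne : ∀ σ ∈ S, (σ • (1 : Matrix (Fin n) (Fin n) ℝ) - A).det ≠ 0 := by
      intro σ hσ
      exact (hdetpos σ hσ.1).ne_zero
    set φ : ℝ → ℝ := fun σ => ∑ i, ∑ j,
      |((σ • (1 : Matrix (Fin n) (Fin n) ℝ) - A).det)⁻¹ *
        (σ • (1 : Matrix (Fin n) (Fin n) ℝ) - A).adjugate i j| with hφ
    have hφcont : ContinuousOn φ S := by
      refine continuousOn_finset_sum _ fun i _ => ?_
      refine continuousOn_finset_sum _ fun j _ => ?_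
      refine ContinuousOn.abs ?_
      refine ContinuousOn.mul ?_ ?_
      · exact ContinuousOn.inv₀ hd.continuousOn hdne
      · exact (hg.matrix_adjugate.matrix_elem i j).continuousOn
    obtain ⟨σm, hσm, hmax⟩ := isCompact_Icc.exists_isMaxOn ⟨0, le_refl 0, hs₀0⟩ hφcont
    set K : ℝ := φ σm with hK
    have hK0 : 0 ≤ K := Finset.sum_nonneg fun i _ =>
      Finset.sum_nonneg fun j _ => abs_nonneg _
    have hfentry : ∀ σ ∈ S, ∀ i j, (σ • (1 : Matrix (Fin n) (Fin n) ℝ) - A)⁻¹ i j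
        = ((σ • (1 : Matrix (Fin n) (Fin n) ℝ) - A).det)⁻¹ *
          (σ • (1 : Matrix (Fin n) (Fin n) ℝ) - A).adjugate i j := by
      intro σ hσ i j
      rw [Matrix.inv_def, Ring.inverse_eq_inv', Matrix.smul_apply, smul_eq_mul]
    have hfK : ∀ σ ∈ S, ∀ i, ∑ j, (σ • (1 : Matrix (Fin n) (Fin n) ℝ) - A)⁻¹ i j ≤ K := by
      intro σ hσ i
      have h1 : ∑ j, (σ • (1 : Matrix (Fin n) (Fin n) ℝ) - A)⁻¹ i j
          ≤ ∑ j, |((σ • (1 : Matrix (Fin n) (Fin n) ℝ) - A).det)⁻¹ *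
              (σ • (1 : Matrix (Fin n) (Fin n) ℝ) - A).adjugate i j| := by
        refine Finset.sum_le_sum fun j _ => ?_
        rw [hfentry σ hσ i j]
        exact le_abs_self _
      refine h1.trans ?_
      have h2 : ∑ j, |((σ • (1 : Matrix (Fin n) (Fin n) ℝ) - A).det)⁻¹ *
          (σ • (1 : Matrix (Fin n) (Fin n) ℝ) - A).adjugate i j| ≤ φ σ := by
        refine Finset.single_le_sum (f := fun i => ∑ j,
          |((σ • (1 : Matrix (Fin n) (Fin n) ℝ) - A).det)⁻¹ *
            (σ • (1 : Matrix (Fin n) (Fin n) ℝ) - A).adjugate i j|)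
          (fun l _ => Finset.sum_nonneg fun j _ => abs_nonneg _) (Finset.mem_univ i)
      exact h2.trans (hmax hσ)
    -- uniform step size
    set δ : ℝ := 1 / (2 * (K + 1)) with hδ
    have hδ0 : 0 < δ := by
      rw [hδ]; positivity
    have hδK : δ * K ≤ 1 / 2 := by
      rw [hδ]
      rw [div_mul_eq_mul_div, mul_comm]
      rw [div_le_div_iff₀ (by positivity) (by norm_num)]
      nlinarith
    have hstepδ : ∀ σ τ : ℝ, 0 ≤ σ → σ ≤ τ → τ ≤ s₀ → τ - σ ≤ δ →
        (∀ i j, 0 ≤ (τ • (1 : Matrix (Fin n) (Fin n) ℝ) - A)⁻¹ i j) →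
        ∀ i j, 0 ≤ (σ • (1 : Matrix (Fin n) (Fin n) ℝ) - A)⁻¹ i j := by
      intro σ τ h0 h1 h2 h3 hP
      have hτS : τ ∈ S := ⟨le_trans h0 h1, h2⟩
      refine step h1 (hdetpos τ (le_trans h0 h1)) hP (r := 1/2) (by norm_num) (by norm_num) ?_
      intro i
      have hs : ∑ j, (τ - σ) * (τ • (1 : Matrix (Fin n) (Fin n) ℝ) - A)⁻¹ i j
          = (τ - σ) * ∑ j, (τ • (1 : Matrix (Fin n) (Fin n) ℝ) - A)⁻¹ i j := by
        rw [Finset.mul_sum]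
      rw [hs]
      have hrowK := hfK τ hτS i
      have hrow0 : 0 ≤ ∑ j, (τ • (1 : Matrix (Fin n) (Fin n) ℝ) - A)⁻¹ i j :=
        Finset.sum_nonneg fun j _ => hP i j
      calc (τ - σ) * ∑ j, (τ • (1 : Matrix (Fin n) (Fin n) ℝ) - A)⁻¹ i j
          ≤ δ * K := by
            apply mul_le_mul (by linarith) hrowK hrow0 hδ0.le
        _ ≤ 1/2 := hδK
    -- downward induction
    have main : ∀ k : ℕ, ∀ σ : ℝ, 0 ≤ σ → σ ≤ s₀ → s₀ - σ ≤ k * δ →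
        ∀ i j, 0 ≤ (σ • (1 : Matrix (Fin n) (Fin n) ℝ) - A)⁻¹ i j := by
      intro k
      induction k with
      | zero =>
          intro σ h0 h1 h2
          simp only [Nat.cast_zero, zero_mul] at h2
          have : σ = s₀ := le_antisymm h1 (by linarith)
          rw [this]
          exact base
      | succ k ih =>
          intro σ h0 h1 h2
          push_cast at h2
          set τ : ℝ := min (σ + δ) s₀ with hτ
          have hτ1 : σ ≤ τ := le_min (by linarith) h1
          have hτ2 : τ ≤ s₀ := min_le_right _ _
          have hτ0 : 0 ≤ τ := le_trans h0 hτ1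
          have hkδ : 0 ≤ (k : ℝ) * δ := mul_nonneg (Nat.cast_nonneg k) hδ0.le
          have hτk : s₀ - τ ≤ k * δ := by
            rcases le_total (σ + δ) s₀ with hcase | hcase
            · rw [hτ, min_eq_left hcase]; linarith
            · rw [hτ, min_eq_right hcase]; linarith
          have hτσ : τ - σ ≤ δ := by
            have := min_le_left (σ + δ) s₀
            rw [hτ]; linarith [min_le_left (σ + δ) s₀]
          exact hstepδ σ τ h0 hτ1 hτ2 hτσ (ih τ hτ0 hτ2 hτk)
    have hP0 : ∀ i j, 0 ≤ ((0:ℝ) • (1 : Matrix (Fin n) (Fin n) ℝ) - A)⁻¹ i j := by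
      refine main ⌈s₀ / δ⌉₊ 0 le_rfl hs₀0 ?_
      rw [sub_zero]
      calc s₀ = (s₀ / δ) * δ := by field_simp
        _ ≤ (⌈s₀ / δ⌉₊ : ℝ) * δ := mul_le_mul_of_nonneg_right (Nat.le_ceil _) hδ0.le
    have hzs : (0:ℝ) • (1 : Matrix (Fin n) (Fin n) ℝ) - A = -A := by
      rw [zero_smul, zero_sub]
    have hdetnegA : IsUnit (-A).det := by
      have := hdetpos 0 le_rfl
      rwa [hzs] at this
    have hdetA : IsUnit A.det := by
      rw [Matrix.det_neg] at hdetnegA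
      exact isUnit_of_mul_isUnit_right hdetnegA
    refine ⟨hdetA, ?_⟩
    have hinvneg : (-A)⁻¹ = -(A⁻¹) := by
      apply Matrix.inv_eq_left_inv
      rw [neg_mul_neg]
      exact Matrix.nonsing_inv_mul A hdetA
    intro i j
    have := hP0 i j
    rw [hzs, hinvneg] at this
    exact this
  · -- backward direction
    rintro ⟨hdet, hM⟩
    rw [Matrix.Hurwitz]
    intro μ hμ
    set Ac : Matrix (Fin n) (Fin n) ℂ := A.map Complex.ofReal with hAc
    have h1 : ¬ IsUnit (μ • (1 : Matrix (Fin n) (Fin n) ℂ) - Ac) := by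
      have := spectrum.mem_iff.mp hμ
      rwa [Algebra.algebraMap_eq_smul_one] at this
    have h2 : (μ • (1 : Matrix (Fin n) (Fin n) ℂ) - Ac).det = 0 := by
      by_contra hcon
      exact h1 ((Matrix.isUnit_iff_isUnit_det _).mpr (isUnit_iff_ne_zero.mpr hcon))
    obtain ⟨x, hx0, hxe⟩ := (Matrix.exists_mulVec_eq_zero_iff).mpr h2
    have heig : ∀ i, (Ac *ᵥ x) i = μ * x i := by
      intro i
      have hfe := congrFun hxe i
      rw [Matrix.sub_mulVec] at hfe
      simp only [Matrix.smul_mulVec, Matrix.one_mulVec, Pi.sub_apply, Pi.smul_apply,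
        smul_eq_mul, Pi.zero_apply] at hfe
      linear_combination -hfe
    -- use the shift c
    set y : Fin n → ℝ := fun i => ‖x i‖ with hy
    have hy0 : ∀ i, 0 ≤ y i := fun i => norm_nonneg _
    have hsum : ∀ i, (μ + c) * x i = ∑ j, ((B i j : ℝ) : ℂ) * x j := by
      intro i
      have hBc : ∀ j, ((B i j : ℝ) : ℂ) = (A i j : ℂ) + (if i = j then (c:ℂ) else 0) := by
        intro j
        rw [hBapp]
        push_cast
        split <;> simp
      calc (μ + c) * x i = (Ac *ᵥ x) i + (c:ℂ) * x i := by
            rw [heig i]; ring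
        _ = ∑ j, (A i j : ℂ) * x j + ∑ j, (if i = j then (c:ℂ) else 0) * x j := by
            rw [sum_ite_mul' i (c:ℂ) x, mulVec_apply', hAc]
            simp [Matrix.map_apply]
        _ = ∑ j, ((A i j : ℂ) + (if i = j then (c:ℂ) else 0)) * x j := by
            rw [← Finset.sum_add_distrib]
            refine Finset.sum_congr rfl fun j _ => by ring
        _ = ∑ j, ((B i j : ℝ) : ℂ) * x j := by
            refine Finset.sum_congr rfl fun j _ => by rw [hBc j]
    have key : ∀ i, ‖μ + c‖ * y i ≤ ∑ j, B i j * y j := by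
      intro i
      have h3 : ‖(μ + c) * x i‖ = ‖μ + c‖ * y i := by
        rw [norm_mul]
      rw [← h3, hsum i]
      refine le_trans (norm_sum_le _ _) ?_
      refine le_of_eq (Finset.sum_congr rfl fun j _ => ?_)
      rw [norm_mul, Complex.norm_real, Real.norm_of_nonneg (hBnn i j)]
    -- nonnegative inverse kills the eigenvector unless |μ + c| < c
    set M : Matrix (Fin n) (Fin n) ℝ := -A⁻¹ with hMdef
    have hMA : M * (-A) = 1 := by
      rw [hMdef, neg_mul_neg]
      exact Matrix.nonsing_inv_mul A hdet
    have hyy : M *ᵥ ((-A) *ᵥ y) = y := by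
      rw [Matrix.mulVec_mulVec, hMA, Matrix.one_mulVec]
    by_cases hcon : c ≤ ‖μ + c‖
    · exfalso
      have hz : ∀ j, ((-A) *ᵥ y) j ≤ 0 := by
        intro j
        have h4 : ((-A) *ᵥ y) j = c * y j - ∑ l, B j l * y l := by
          rw [mulVec_apply']
          have : ∑ l, (-A) j l * y l = -∑ l, A j l * y l := by
            rw [← Finset.sum_neg_distrib]
            exact Finset.sum_congr rfl fun l _ => by rw [Matrix.neg_apply]; ring
          rw [this]
          have hBsum : ∑ l, B j l * y l = ∑ l, A j l * y l + c * y j := by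
            calc ∑ l, B j l * y l = ∑ l, (A j l + (if j = l then c else 0)) * y l := by
                  exact Finset.sum_congr rfl fun l _ => by rw [hBapp]
              _ = ∑ l, A j l * y l + ∑ l, (if j = l then c else 0) * y l := by
                  rw [← Finset.sum_add_distrib]
                  exact Finset.sum_congr rfl fun l _ => by ring
              _ = ∑ l, A j l * y l + c * y j := by
                  rw [sum_ite_mul' j c y]
          linarith [hBsum]
        rw [h4]
        have := key j
        nlinarith [hy0 j]
      have hyle : ∀ j, y j ≤ 0 := by
        intro j
        have := congrFun hyy j
        rw [← this, mulVec_apply']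
        refine Finset.sum_nonpos fun l _ => ?_
        exact mul_nonpos_of_nonneg_of_nonpos (hM j l) (hz l)
      apply hx0
      funext j
      have : y j = 0 := le_antisymm (hyle j) (hy0 j)
      rw [hy] at this
      exact norm_eq_zero.mp this
    · push_neg at hcon
      have h5 : (μ + c).re ≤ ‖μ + c‖ := Complex.re_le_norm _
      rw [Complex.add_re, Complex.ofReal_re] at h5
      linarith
end

section
/- Let A ∈ ℝ^{n×n} be a Metzler matrix, and suppose ξ = (ξ₁,…,ξ_n) ∈ ℝ^n and z = (z₁,…,z_n) ∈ ℝ^n satisfy ξ > 0, Aξ < 0, z > 0 and Aᵀz < 0 (all inequalities entrywise). Then the diagonal matrix P = diag(z₁/ξ₁, …, z_n/ξ_n) has positive diagonal entries and satisfies AᵀP + PA ≺ 0 (negative definite). -/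
open Matrix Finset

/-- Quadratic form positivity for a symmetric matrix with nonpositive off-diagonal
entries admitting a positive vector `ξ` with `Q ξ > 0` entrywise. -/
lemma quad_pos_aux {n : ℕ} (Q : Matrix (Fin n) (Fin n) ℝ) (ξ : Fin n → ℝ)
    (hξ : ∀ i, 0 < ξ i) (hsym : ∀ i j, Q i j = Q j i)
    (hoff : ∀ i j, i ≠ j → Q i j ≤ 0) (hQξ : ∀ i, 0 < (Q *ᵥ ξ) i)
    (x : Fin n → ℝ) (hx : x ≠ 0) : 0 < x ⬝ᵥ (Q *ᵥ x) := by
  have hξ0 : ∀ i, ξ i ≠ 0 := fun i => (hξ i).ne'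
  have key : x ⬝ᵥ (Q *ᵥ x) =
      (∑ i, (Q *ᵥ ξ) i * (x i ^ 2 / ξ i)) +
      (1/2) * ∑ i, ∑ j, (-Q i j) * ξ i * ξ j * (x i / ξ i - x j / ξ j) ^ 2 := by
    have term : ∀ i j, x i * (Q i j * x j) =
        (Q i j * ξ j) * (x i ^ 2 / ξ i) / 2 + (Q i j * ξ i) * (x j ^ 2 / ξ j) / 2 +
        (1/2) * ((-Q i j) * ξ i * ξ j * (x i / ξ i - x j / ξ j) ^ 2) := by
      intro i j
      have hi := hξ0 i; have hj := hξ0 j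
      field_simp
      ring
    have e1 : x ⬝ᵥ (Q *ᵥ x) = ∑ i, ∑ j, x i * (Q i j * x j) := by
      simp [dotProduct, Matrix.mulVec, Finset.mul_sum]
    have swap : ∑ i, ∑ j, (Q i j * ξ i) * (x j ^ 2 / ξ j) / 2
        = ∑ i, ∑ j, (Q i j * ξ j) * (x i ^ 2 / ξ i) / 2 := by
      rw [Finset.sum_comm]
      refine Finset.sum_congr rfl fun i _ => Finset.sum_congr rfl fun j _ => ?_
      rw [hsym j i]
    have e2 : ∀ i, (∑ j, (Q i j * ξ j) * (x i ^ 2 / ξ i)) = (Q *ᵥ ξ) i * (x i ^ 2 / ξ i) := by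
      intro i
      rw [← Finset.sum_mul]
      simp [Matrix.mulVec, dotProduct]
    calc x ⬝ᵥ (Q *ᵥ x) = ∑ i, ∑ j, x i * (Q i j * x j) := e1
      _ = ∑ i, ∑ j, ((Q i j * ξ j) * (x i ^ 2 / ξ i) / 2 + (Q i j * ξ i) * (x j ^ 2 / ξ j) / 2 +
          (1/2) * ((-Q i j) * ξ i * ξ j * (x i / ξ i - x j / ξ j) ^ 2)) := by
          refine Finset.sum_congr rfl fun i _ => Finset.sum_congr rfl fun j _ => term i j
      _ = (∑ i, ∑ j, (Q i j * ξ j) * (x i ^ 2 / ξ i) / 2)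
          + (∑ i, ∑ j, (Q i j * ξ i) * (x j ^ 2 / ξ j) / 2)
          + (∑ i, ∑ j, (1/2) * ((-Q i j) * ξ i * ξ j * (x i / ξ i - x j / ξ j) ^ 2)) := by
          simp [Finset.sum_add_distrib]
      _ = _ := by
          rw [swap]
          have hS : (∑ i, ∑ j, (Q i j * ξ j) * (x i ^ 2 / ξ i) / 2)
              = (∑ i, (Q *ᵥ ξ) i * (x i ^ 2 / ξ i)) / 2 := by
            rw [Finset.sum_div]
            refine Finset.sum_congr rfl fun i _ => ?_
            rw [← Finset.sum_div, e2 i]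
          have hT : (∑ i, ∑ j, (1/2:ℝ) * ((-Q i j) * ξ i * ξ j * (x i/ξ i - x j/ξ j)^2))
              = (1/2) * ∑ i, ∑ j, (-Q i j) * ξ i * ξ j * (x i/ξ i - x j/ξ j)^2 := by
            rw [Finset.mul_sum]
            exact Finset.sum_congr rfl fun i _ => (Finset.mul_sum _ _ _).symm
          rw [hS, hT]; ring
  rw [key]
  have h2 : 0 ≤ (1/2 : ℝ) * ∑ i, ∑ j, (-Q i j) * ξ i * ξ j * (x i / ξ i - x j / ξ j) ^ 2 := by
    apply mul_nonneg (by norm_num)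
    refine Finset.sum_nonneg fun i _ => Finset.sum_nonneg fun j _ => ?_
    by_cases h : i = j
    · subst h; simp
    · exact mul_nonneg (mul_nonneg (mul_nonneg (neg_nonneg.2 (hoff i j h)) (hξ i).le)
        (hξ j).le) (sq_nonneg _)
  have h1 : 0 < ∑ i, (Q *ᵥ ξ) i * (x i ^ 2 / ξ i) := by
    obtain ⟨k, hk⟩ := Function.ne_iff.1 hx
    refine Finset.sum_pos' (fun i _ => mul_nonneg (hQξ i).le
      (div_nonneg (sq_nonneg _) (hξ i).le)) ⟨k, Finset.mem_univ k, ?_⟩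
    exact mul_pos (hQξ k) (div_pos (pow_two_pos_of_ne_zero hk) (hξ k))
  linarith

/-- If a Metzler matrix `A` admits `ξ > 0` with `Aξ < 0` and `z > 0` with `Aᵀz < 0`
(entrywise), then `P = diag(z₁/ξ₁, …, zₙ/ξₙ)` has positive diagonal entries and
satisfies `AᵀP + PA ≺ 0`. -/
theorem metzler_diag_lyapunov_of_pos_vecs {n : ℕ} (A : Matrix (Fin n) (Fin n) ℝ)
    (hA : A.Metzler) (ξ z : Fin n → ℝ)
    (hξ : ∀ i, 0 < ξ i) (hAξ : ∀ i, (A *ᵥ ξ) i < 0)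
    (hz : ∀ i, 0 < z i) (hAz : ∀ i, (Aᵀ *ᵥ z) i < 0) :
    (∀ i, 0 < z i / ξ i) ∧
    (-(Aᵀ * Matrix.diagonal (fun i => z i / ξ i) +
        Matrix.diagonal (fun i => z i / ξ i) * A)).PosDef := by
  set p : Fin n → ℝ := fun i => z i / ξ i with hpdef
  have hp : ∀ i, 0 < p i := fun i => div_pos (hz i) (hξ i)
  set Q : Matrix (Fin n) (Fin n) ℝ := -(Aᵀ * Matrix.diagonal p + Matrix.diagonal p * A)
    with hQdef
  have entry : ∀ i j, Q i j = -(A j i * p j + p i * A i j) := by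
    intro i j
    simp [hQdef, Matrix.mul_diagonal, Matrix.diagonal_mul, Matrix.transpose_apply]
  have hsym : ∀ i j, Q i j = Q j i := by
    intro i j; rw [entry, entry]; ring
  have hoff : ∀ i j, i ≠ j → Q i j ≤ 0 := by
    intro i j hij
    rw [entry]
    have h1 : 0 ≤ A j i := hA j i (Ne.symm hij)
    have h2 : 0 ≤ A i j := hA i j hij
    nlinarith [hp i, hp j]
  have hz' : ∀ j, p j * ξ j = z j := fun j => div_mul_cancel₀ _ (hξ j).ne'
  have hQξ : ∀ i, 0 < (Q *ᵥ ξ) i := by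
    intro i
    have e : (Q *ᵥ ξ) i = -((Aᵀ *ᵥ z) i) - p i * (A *ᵥ ξ) i := by
      have : (Q *ᵥ ξ) i = ∑ j, (-(A j i * z j) - p i * (A i j * ξ j)) := by
        simp only [Matrix.mulVec, dotProduct]
        refine Finset.sum_congr rfl fun j _ => ?_
        rw [entry, ← hz' j]; ring
      rw [this, Finset.sum_sub_distrib]
      simp [Matrix.mulVec, dotProduct, Matrix.transpose_apply, Finset.mul_sum,
        Finset.sum_neg_distrib]
    rw [e]
    have h1 : 0 < -((Aᵀ *ᵥ z) i) := by linarith [hAz i]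
    have h2 : 0 < -(p i * (A *ᵥ ξ) i) := by
      have := mul_pos (hp i) (neg_pos.2 (hAξ i)); linarith
    linarith
  refine ⟨hp, Matrix.posDef_iff_dotProduct_mulVec.2 ⟨?_, ?_⟩⟩
  · show Qᴴ = Q
    ext i j
    simp only [Matrix.conjTranspose_apply, star_trivial]
    exact (hsym i j).symm
  · intro x hx
    simpa [dotProduct] using quad_pos_aux Q ξ hξ hsym hoff hQξ x hx
end

section
/- Let B ∈ ℝ^{n×n} have all entries nonnegative, and suppose ξ = (ξ₁,…,ξ_n) and z = (z₁,…,z_n) satisfy ξ > 0, Bξ < ξ, z > 0 and Bᵀz < z (entrywise). Then the diagonal matrix P = diag(z₁/ξ₁, …, z_n/ξ_n) has positive diagonal entries and satisfies BᵀPB ≺ P, i.e., BᵀPB − P is negative definite. -/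
open Matrix

/-- If a nonnegative matrix `B` admits `ξ > 0` with `Bξ < ξ` and `z > 0` with `Bᵀz < z`
(entrywise), then `P = diag(z₁/ξ₁, …, zₙ/ξₙ)` has positive diagonal entries and
satisfies `BᵀPB ≺ P`. -/
theorem nonneg_diag_stein_of_pos_vecs {n : ℕ} (B : Matrix (Fin n) (Fin n) ℝ)
    (hB : ∀ i j, 0 ≤ B i j) (ξ z : Fin n → ℝ)
    (hξ : ∀ i, 0 < ξ i) (hBξ : ∀ i, (B *ᵥ ξ) i < ξ i)
    (hz : ∀ i, 0 < z i) (hBz : ∀ i, (Bᵀ *ᵥ z) i < z i) :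
    (∀ i, 0 < z i / ξ i) ∧
    (Matrix.diagonal (fun i => z i / ξ i) -
      Bᵀ * Matrix.diagonal (fun i => z i / ξ i) * B).PosDef := by
  set p : Fin n → ℝ := fun i => z i / ξ i with hp
  have hppos : ∀ i, 0 < p i := fun i => div_pos (hz i) (hξ i)
  refine ⟨hppos, Matrix.posDef_iff_dotProduct_mulVec.mpr ⟨?_, ?_⟩⟩
  · -- Hermitian
    have h1 : (Matrix.diagonal p).IsHermitian := Matrix.isHermitian_diagonal _
    have h2 : (Bᵀ * Matrix.diagonal p * B).IsHermitian := by
      have := Matrix.isHermitian_conjTranspose_mul_mul B (Matrix.isHermitian_diagonal p)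
      simpa [Matrix.conjTranspose_eq_transpose_of_trivial] using this
    exact h1.sub h2
  · intro x hx
    have key :
        dotProduct (star x) ((Matrix.diagonal p - Bᵀ * Matrix.diagonal p * B) *ᵥ x)
          = (∑ i, p i * x i ^ 2) - ∑ i, p i * (B *ᵥ x) i ^ 2 := by
      rw [Matrix.sub_mulVec, dotProduct_sub]
      congr 1
      · simp [Matrix.mulVec_diagonal, dotProduct, Finset.mul_sum]
        ring_nf
        exact Finset.sum_congr rfl fun i _ => by ring
      · rw [← Matrix.mulVec_mulVec, ← Matrix.mulVec_mulVec,
          Matrix.dotProduct_mulVec, star_trivial, Matrix.vecMul_transpose]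
        simp [Matrix.mulVec_diagonal, dotProduct]
        exact Finset.sum_congr rfl fun i _ => by ring
    rw [key]
    have hy : ∀ i, (B *ᵥ x) i ^ 2 ≤ ξ i * ∑ j, B i j * x j ^ 2 / ξ j := by
      intro i
      have cs := Finset.sum_mul_sq_le_sq_mul_sq Finset.univ
        (fun j => Real.sqrt (B i j * ξ j)) (fun j => Real.sqrt (B i j / ξ j) * x j)
      have e1 : ∀ j, Real.sqrt (B i j * ξ j) * (Real.sqrt (B i j / ξ j) * x j) = B i j * x j := by
        intro j
        rw [← mul_assoc, ← Real.sqrt_mul (mul_nonneg (hB i j) (hξ j).le)]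
        have : B i j * ξ j * (B i j / ξ j) = (B i j) ^ 2 := by
          field_simp [(hξ j).ne']
        rw [this, Real.sqrt_sq (hB i j)]
      have e2 : ∀ j, Real.sqrt (B i j * ξ j) ^ 2 = B i j * ξ j := fun j =>
        Real.sq_sqrt (mul_nonneg (hB i j) (hξ j).le)
      have e3 : ∀ j, (Real.sqrt (B i j / ξ j) * x j) ^ 2 = B i j * x j ^ 2 / ξ j := by
        intro j
        rw [mul_pow, Real.sq_sqrt (div_nonneg (hB i j) (hξ j).le)]
        ring
      simp only [e1, e2, e3] at cs
      have hS : 0 ≤ ∑ j, B i j * x j ^ 2 / ξ j :=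
        Finset.sum_nonneg fun j _ => div_nonneg (mul_nonneg (hB i j) (sq_nonneg _)) (hξ j).le
      calc (B *ᵥ x) i ^ 2 = (∑ j, B i j * x j) ^ 2 := by simp [Matrix.mulVec, dotProduct]
        _ ≤ (∑ j, B i j * ξ j) * ∑ j, B i j * x j ^ 2 / ξ j := cs
        _ ≤ ξ i * ∑ j, B i j * x j ^ 2 / ξ j := by
            apply mul_le_mul_of_nonneg_right _ hS
            simpa [Matrix.mulVec, dotProduct] using (hBξ i).le
    have step2 : ∑ i, p i * (B *ᵥ x) i ^ 2 ≤ ∑ j, x j ^ 2 / ξ j * (Bᵀ *ᵥ z) j := by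
      calc ∑ i, p i * (B *ᵥ x) i ^ 2
          ≤ ∑ i, z i * ∑ j, B i j * x j ^ 2 / ξ j := by
            apply Finset.sum_le_sum
            intro i _
            calc p i * (B *ᵥ x) i ^ 2 ≤ p i * (ξ i * ∑ j, B i j * x j ^ 2 / ξ j) :=
                  mul_le_mul_of_nonneg_left (hy i) (hppos i).le
              _ = z i * ∑ j, B i j * x j ^ 2 / ξ j := by
                  show z i / ξ i * (ξ i * _) = _
                  rw [← mul_assoc, div_mul_cancel₀ _ (hξ i).ne']
        _ = ∑ j, x j ^ 2 / ξ j * (Bᵀ *ᵥ z) j := by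
            simp_rw [Finset.mul_sum]
            rw [Finset.sum_comm]
            refine Finset.sum_congr rfl fun j _ => ?_
            simp only [Matrix.mulVec, dotProduct, Matrix.transpose_apply, Finset.mul_sum]
            exact Finset.sum_congr rfl fun i _ => by ring
    have step3 : ∑ j, x j ^ 2 / ξ j * (Bᵀ *ᵥ z) j < ∑ j, p j * x j ^ 2 := by
      obtain ⟨j0, hj0⟩ := Function.ne_iff.mp hx
      have : ∑ j, p j * x j ^ 2 = ∑ j, x j ^ 2 / ξ j * z j :=
        Finset.sum_congr rfl fun j _ => by rw [hp]; ring
      rw [this]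
      refine Finset.sum_lt_sum
        (fun j _ => mul_le_mul_of_nonneg_left (hBz j).le
          (div_nonneg (sq_nonneg _) (hξ j).le))
        ⟨j0, Finset.mem_univ j0, mul_lt_mul_of_pos_left (hBz j0)
          (div_pos (by simpa using sq_pos_of_ne_zero hj0) (hξ j0))⟩
    linarith [lt_of_le_of_lt step2 step3]
end

section
/- Let A ∈ ℝ^{n×n} be Hurwitz, and let B ∈ ℝ^{n×m}, C ∈ ℝ^{r×n}, D ∈ ℝ^{r×m} be such that every entry of C e^{At} B is nonnegative for all t ≥ 0 and every entry of D is nonnegative. For ω ∈ ℝ define the transfer matrix G(iω) = C (iωI − A)⁻¹ B + D, which equals ∫₀^∞ e^{−iωt} C e^{At} B dt + D. Then for every ω ∈ ℝ and all indices j, k, one has |G(iω)_{jk}| ≤ G(0)_{jk}, where G(0) = D − C A⁻¹ B has nonnegative entries. Consequently |G(iω) w| ≤ G(0) |w| entrywise for every w ∈ ℂ^m, where |·| denotes the entrywise absolute value (modulus). -/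
open Matrix

section HurwitzAuxSection
open Matrix NormedSpace
open scoped NNReal


open scoped Matrix.Norms.L2Operator

noncomputable def ratNormedAlgebraMatC (N : ℕ) : NormedAlgebra ℚ (Matrix (Fin N) (Fin N) ℂ) :=
  NormedAlgebra.restrictScalars ℚ ℂ _

noncomputable def ratNormedAlgebraMatR (N : ℕ) : NormedAlgebra ℚ (Matrix (Fin N) (Fin N) ℝ) :=
  NormedAlgebra.restrictScalars ℚ ℝ _

attribute [local instance] ratNormedAlgebraMatC ratNormedAlgebraMatR

namespace HurwitzAux
variable {N : ℕ}

/-- `X ↦ X *ᵥ v` as a continuous linear map. -/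
noncomputable def mulVecCLM (v : Fin N → ℂ) : Matrix (Fin N) (Fin N) ℂ →L[ℂ] (Fin N → ℂ) :=
  LinearMap.toContinuousLinearMap
    { toFun := fun X => X *ᵥ v
      map_add' := fun X Y => Matrix.add_mulVec X Y v
      map_smul' := fun c X => Matrix.smul_mulVec c X v }

/-- exp of `X + z•1`. -/
lemma exp_add_smul_one (X : Matrix (Fin N) (Fin N) ℂ) (z : ℂ) :
    exp (X + z • (1 : Matrix (Fin N) (Fin N) ℂ)) = Complex.exp z • exp X := by
  have hcomm : Commute X (z • (1 : Matrix (Fin N) (Fin N) ℂ)) :=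
    (Commute.one_right X).smul_right z
  rw [exp_add_of_commute hcomm]
  have h1 : (z • (1 : Matrix (Fin N) (Fin N) ℂ)) = algebraMap ℂ _ z :=
    (Algebra.algebraMap_eq_smul_one z).symm
  rw [h1, ← map_exp (algebraMap ℂ (Matrix (Fin N) (Fin N) ℂ)) (continuous_algebraMap _ _),
    ← Complex.exp_eq_exp_ℂ, Algebra.algebraMap_eq_smul_one, mul_smul_comm, mul_one]


@[simp] lemma mulVecCLM_apply (v : Fin N → ℂ) (X : Matrix (Fin N) (Fin N) ℂ) :
    mulVecCLM v X = X *ᵥ v := rfl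

lemma exp_mulVec_of_pow_eq_zero (M : Matrix (Fin N) (Fin N) ℂ) (v : Fin N → ℂ) (k : ℕ)
    (hk : M ^ k *ᵥ v = 0) (t : ℝ) :
    exp (t • M) *ᵥ v
      = ∑ j ∈ Finset.range k, (((t : ℂ) ^ j * ((Nat.factorial j : ℂ))⁻¹)) • (M ^ j *ᵥ v) := by
  have hsum : Summable fun n => ((Nat.factorial n : ℂ))⁻¹ • (t • M) ^ n :=
    expSeries_summable' (𝕂 := ℂ) (t • M)
  have h0 : exp (t • M) *ᵥ v = ∑' n : ℕ, ((Nat.factorial n : ℂ))⁻¹ • ((t • M) ^ n *ᵥ v) := by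
    rw [show exp (t • M) *ᵥ v = mulVecCLM v (exp (t • M)) from rfl, exp_eq_tsum (𝕂 := ℂ),
      (mulVecCLM v).map_tsum hsum]
    simp [Matrix.smul_mulVec]
  rw [h0]
  have hterm : ∀ n : ℕ, ((Nat.factorial n : ℂ))⁻¹ • ((t • M) ^ n *ᵥ v)
      = (((t : ℂ) ^ n * ((Nat.factorial n : ℂ))⁻¹)) • (M ^ n *ᵥ v) := by
    intro n
    rw [smul_pow, Matrix.smul_mulVec, ← algebraMap_smul ℂ (t ^ n), smul_smul]
    congr 1
    simp only [Complex.coe_algebraMap]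
    push_cast
    ring
  have hzero : ∀ n ∉ Finset.range k, ((Nat.factorial n : ℂ))⁻¹ • ((t • M) ^ n *ᵥ v) = 0 := by
    intro n hn
    rw [Finset.mem_range, not_lt] at hn
    have : M ^ n *ᵥ v = 0 := by
      obtain ⟨d, rfl⟩ := Nat.exists_eq_add_of_le hn
      rw [add_comm, pow_add, ← Matrix.mulVec_mulVec, hk, Matrix.mulVec_zero]
    rw [smul_pow, Matrix.smul_mulVec, this, smul_zero, smul_zero]
  rw [tsum_eq_sum hzero]
  exact Finset.sum_congr rfl fun n _ => hterm n

end HurwitzAux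

namespace HurwitzAux
variable {N : ℕ}

lemma pow_div_factorial_le_exp (ε t : ℝ) (hε : 0 < ε) (ht : 0 ≤ t) (j : ℕ) :
    t ^ j * ((Nat.factorial j : ℝ))⁻¹ ≤ ε⁻¹ ^ j * Real.exp (ε * t) := by
  have h1 : (ε * t) ^ j / (Nat.factorial j) ≤ Real.exp (ε * t) := by
    have := Real.sum_le_exp_of_nonneg (mul_nonneg hε.le ht) (j + 1)
    refine le_trans ?_ this
    exact Finset.single_le_sum (f := fun i => (ε * t) ^ i / (Nat.factorial i))
      (fun i _ => by positivity) (Finset.self_mem_range_succ j)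
  have h2 : t ^ j * ((Nat.factorial j : ℝ))⁻¹
      = ε⁻¹ ^ j * ((ε * t) ^ j / (Nat.factorial j)) := by
    field_simp [mul_pow]
    rw [mul_pow, ← mul_assoc, ← mul_pow, one_div, inv_mul_cancel₀ hε.ne', one_pow, one_mul]
  rw [h2]
  exact mul_le_mul_of_nonneg_left h1 (by positivity)

lemma decay_of_gen_eig (M : Matrix (Fin N) (Fin N) ℂ) (ε : ℝ) (hε : 0 < ε) {μ : ℂ}
    (hμ : μ.re + ε ≤ -ε) {v : Fin N → ℂ} {k : ℕ}
    (hv : (M - μ • 1) ^ k *ᵥ v = 0) :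
    ∃ c : ℝ, 0 ≤ c ∧ ∀ t : ℝ, 0 ≤ t → ‖exp (t • M) *ᵥ v‖ ≤ c * Real.exp (-ε * t) := by
  set N' := M - μ • (1 : Matrix (Fin N) (Fin N) ℂ) with hN'
  refine ⟨∑ j ∈ Finset.range k, ε⁻¹ ^ j * ‖N' ^ j *ᵥ v‖,
    Finset.sum_nonneg fun j _ => by positivity, fun t ht => ?_⟩
  have hsplit : t • M = t • N' + ((t : ℂ) * μ) • (1 : Matrix (Fin N) (Fin N) ℂ) := by
    rw [hN', smul_sub]
    have : ((t : ℂ) * μ) • (1 : Matrix (Fin N) (Fin N) ℂ) = t • (μ • 1) := by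
      rw [← algebraMap_smul ℂ t (μ • (1 : Matrix (Fin N) (Fin N) ℂ)), smul_smul,
        Complex.coe_algebraMap]
    rw [this]
    abel
  have hexp : exp (t • M) *ᵥ v
      = Complex.exp ((t : ℂ) * μ) • (exp (t • N') *ᵥ v) := by
    rw [hsplit, exp_add_smul_one, Matrix.smul_mulVec]
  rw [hexp, norm_smul]
  have habs : ‖Complex.exp ((t : ℂ) * μ)‖ = Real.exp (t * μ.re) := by
    rw [Complex.norm_exp]
    norm_num
  rw [habs]
  have hnil := exp_mulVec_of_pow_eq_zero N' v k hv t
  calc Real.exp (t * μ.re) * ‖exp (t • N') *ᵥ v‖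
      ≤ Real.exp (t * μ.re) *
        ∑ j ∈ Finset.range k, (t ^ j * ((Nat.factorial j : ℝ))⁻¹) * ‖N' ^ j *ᵥ v‖ := by
        refine mul_le_mul_of_nonneg_left ?_ (Real.exp_nonneg _)
        rw [hnil]
        refine le_trans (norm_sum_le _ _) (Finset.sum_le_sum fun j _ => ?_)
        rw [norm_smul]
        refine mul_le_mul_of_nonneg_right ?_ (norm_nonneg _)
        rw [norm_mul, norm_pow, norm_inv]
        simp only [Complex.norm_real, Complex.norm_natCast, Real.norm_eq_abs]
        rw [abs_of_nonneg ht]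
    _ ≤ Real.exp (t * μ.re) *
        ∑ j ∈ Finset.range k, (ε⁻¹ ^ j * Real.exp (ε * t)) * ‖N' ^ j *ᵥ v‖ := by
        refine mul_le_mul_of_nonneg_left
          (Finset.sum_le_sum fun j _ => mul_le_mul_of_nonneg_right
            (pow_div_factorial_le_exp ε t hε ht j) (norm_nonneg _)) (Real.exp_nonneg _)
    _ = (∑ j ∈ Finset.range k, ε⁻¹ ^ j * ‖N' ^ j *ᵥ v‖)
          * Real.exp (t * μ.re + ε * t) := by
        rw [Real.exp_add, Finset.mul_sum, Finset.sum_mul]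
        refine Finset.sum_congr rfl fun j _ => by ring
    _ ≤ (∑ j ∈ Finset.range k, ε⁻¹ ^ j * ‖N' ^ j *ᵥ v‖) * Real.exp (-ε * t) := by
        refine mul_le_mul_of_nonneg_left (Real.exp_le_exp.2 ?_)
          (Finset.sum_nonneg fun j _ => by positivity)
        have : t * μ.re + ε * t = t * (μ.re + ε) := by ring
        rw [this]
        calc t * (μ.re + ε) ≤ t * (-ε) := by
              exact mul_le_mul_of_nonneg_left hμ ht
          _ = -ε * t := by ring

end HurwitzAux

namespace HurwitzAux
variable {N : ℕ}

lemma vec_decay (M : Matrix (Fin N) (Fin N) ℂ) (ε : ℝ) (hε : 0 < ε)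
    (hspec : ∀ μ ∈ spectrum ℂ M, μ.re + ε ≤ -ε) (v : Fin N → ℂ) :
    ∃ c : ℝ, 0 ≤ c ∧ ∀ t : ℝ, 0 ≤ t → ‖exp (t • M) *ᵥ v‖ ≤ c * Real.exp (-ε * t) := by
  have htop := Module.End.iSup_maxGenEigenspace_eq_top (K := ℂ)
    (Matrix.toLinAlgEquiv' M : Module.End ℂ (Fin N → ℂ))
  have hv : v ∈ ⨆ μ : ℂ, Module.End.maxGenEigenspace (Matrix.toLinAlgEquiv' M : Module.End ℂ (Fin N → ℂ)) μ := by
    rw [htop]; trivial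
  rw [Submodule.mem_iSup_iff_exists_finsupp] at hv
  obtain ⟨g, hg, hgsum⟩ := hv
  have hcomp : ∀ μ : ℂ, ∃ c : ℝ, 0 ≤ c ∧ ∀ t : ℝ, 0 ≤ t →
      ‖exp (t • M) *ᵥ g μ‖ ≤ c * Real.exp (-ε * t) := by
    intro μ
    by_cases hzero : g μ = 0
    · exact ⟨0, le_refl 0, fun t ht => by simp [hzero]⟩
    · -- μ is in the spectrum
      have hμspec : μ ∈ spectrum ℂ M := by
        have hne : Module.End.maxGenEigenspace (Matrix.toLinAlgEquiv' M : Module.End ℂ (Fin N → ℂ)) μ ≠ ⊥ := by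
          intro hbot
          exact hzero (by simpa [hbot] using hg μ)
        have h1 : Module.End.HasUnifEigenvalue
            (Matrix.toLinAlgEquiv' M : Module.End ℂ (Fin N → ℂ)) μ 1 :=
          Module.End.HasUnifEigenvalue.lt zero_lt_one hne
        have := h1.mem_spectrum
        rwa [AlgEquiv.spectrum_eq Matrix.toLinAlgEquiv' M] at this
      obtain ⟨k, hk⟩ := (Module.End.mem_maxGenEigenspace _ _ _).1 (hg μ)
      have hmat : (M - μ • 1) ^ k *ᵥ g μ = 0 := by
        have he : (Matrix.toLinAlgEquiv' M : Module.End ℂ (Fin N → ℂ)) - μ • 1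
            = Matrix.toLinAlgEquiv' (M - μ • 1) := by
          simp [map_sub, _root_.map_smul, _root_.map_one]
        rw [he, ← map_pow, Matrix.toLinAlgEquiv'_apply] at hk
        exact hk
      exact decay_of_gen_eig M ε hε (hspec μ hμspec) hmat
  choose c hc0 hcb using hcomp
  refine ⟨∑ μ ∈ g.support, c μ, Finset.sum_nonneg fun μ _ => hc0 μ, fun t ht => ?_⟩
  have hsum : exp (t • M) *ᵥ v = ∑ μ ∈ g.support, exp (t • M) *ᵥ g μ := by
    rw [← hgsum]
    rw [Finsupp.sum]
    rw [show ∀ w, exp (t • M) *ᵥ w = (exp (t • M)).mulVecLin w from fun _ => rfl]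
    rw [map_sum]
    rfl
  rw [hsum]
  calc ‖∑ μ ∈ g.support, exp (t • M) *ᵥ g μ‖
      ≤ ∑ μ ∈ g.support, ‖exp (t • M) *ᵥ g μ‖ := norm_sum_le _ _
    _ ≤ ∑ μ ∈ g.support, c μ * Real.exp (-ε * t) :=
        Finset.sum_le_sum fun μ _ => hcb μ t ht
    _ = (∑ μ ∈ g.support, c μ) * Real.exp (-ε * t) := by rw [Finset.sum_mul]

end HurwitzAux

namespace HurwitzAux
variable {N : ℕ}

lemma exists_eps (M : Matrix (Fin N) (Fin N) ℂ) (hM : ∀ μ ∈ spectrum ℂ M, μ.re < 0) :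
    ∃ ε : ℝ, 0 < ε ∧ ∀ μ ∈ spectrum ℂ M, μ.re + ε ≤ -ε := by
  rcases (spectrum ℂ M).eq_empty_or_nonempty with h | h
  · exact ⟨1, one_pos, by simp [h]⟩
  · obtain ⟨μ0, hμ0, hmax⟩ := Set.exists_max_image (spectrum ℂ M) Complex.re
      (Matrix.finite_spectrum M) h
    refine ⟨-μ0.re / 2, by have := hM μ0 hμ0; linarith, fun μ hμ => ?_⟩
    have h1 := hmax μ hμ
    have h2 := hM μ0 hμ0
    linarith

lemma matrix_decay (M : Matrix (Fin N) (Fin N) ℂ) (hM : ∀ μ ∈ spectrum ℂ M, μ.re < 0) :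
    ∃ c ε : ℝ, 0 < ε ∧ 0 ≤ c ∧ ∀ t : ℝ, 0 ≤ t → ‖exp (t • M)‖ ≤ c * Real.exp (-ε * t) := by
  obtain ⟨ε, hε, hspec⟩ := exists_eps M hM
  have hvec := fun i : Fin N => vec_decay M ε hε hspec (Pi.single i 1)
  choose c hc0 hcb using hvec
  refine ⟨∑ _j : Fin N, ∑ i, c i, ε, hε,
    Finset.sum_nonneg fun _ _ => Finset.sum_nonneg fun i _ => hc0 i, fun t ht => ?_⟩
  have hentry : ∀ j i, ‖exp (t • M) j i‖ ≤ c i * Real.exp (-ε * t) := by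
    intro j i
    have h1 : exp (t • M) j i = (exp (t • M) *ᵥ Pi.single i 1) j := by
      rw [Matrix.mulVec_single]
      simp
    rw [h1]
    exact le_trans (norm_le_pi_norm _ j) (hcb i t ht)
  rw [Matrix.cstar_norm_def]
  have hnn : 0 ≤ (∑ _j : Fin N, ∑ i, c i) * Real.exp (-ε * t) :=
    mul_nonneg (Finset.sum_nonneg fun _ _ => Finset.sum_nonneg fun i _ => hc0 i) (Real.exp_nonneg _)
  refine ContinuousLinearMap.opNorm_le_bound _ hnn fun x => ?_
  set y := Matrix.toEuclideanCLM (n := Fin N) (𝕜 := ℂ) (exp (t • M)) x with hy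
  have hyj : ∀ j, ‖y j‖ ≤ (∑ i, c i) * Real.exp (-ε * t) * ‖x‖ := by
    intro j
    have h1 : y j = ∑ i, exp (t • M) j i * x i := rfl
    rw [h1, Finset.sum_mul, Finset.sum_mul]
    refine le_trans (norm_sum_le _ _) (Finset.sum_le_sum fun i _ => ?_)
    rw [norm_mul]
    exact mul_le_mul (hentry j i) (PiLp.norm_apply_le x i) (norm_nonneg _)
      (mul_nonneg (hc0 i) (Real.exp_nonneg _))
  rw [EuclideanSpace.norm_eq]
  calc √(∑ j, ‖y j‖ ^ 2) ≤ √((∑ j, ‖y j‖) ^ 2) :=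
        Real.sqrt_le_sqrt (Finset.sum_sq_le_sq_sum_of_nonneg fun j _ => norm_nonneg _)
    _ = ∑ j, ‖y j‖ := Real.sqrt_sq (Finset.sum_nonneg fun j _ => norm_nonneg _)
    _ ≤ ∑ _j : Fin N, (∑ i, c i) * Real.exp (-ε * t) * ‖x‖ := Finset.sum_le_sum fun j _ => hyj j
    _ = (∑ _j : Fin N, ∑ i, c i) * Real.exp (-ε * t) * ‖x‖ := by
        rw [← Finset.sum_mul, ← Finset.sum_mul]

end HurwitzAux

namespace HurwitzAux
variable {N : ℕ}
open MeasureTheory Filter Set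

lemma key_integral (M : Matrix (Fin N) (Fin N) ℂ) (hM : ∀ μ ∈ spectrum ℂ M, μ.re < 0) :
    IntegrableOn (fun t : ℝ => exp (t • M)) (Set.Ioi 0) ∧
    (∫ t in Set.Ioi (0:ℝ), exp (t • M)) * M = -1 ∧
    M⁻¹ = -∫ t in Set.Ioi (0:ℝ), exp (t • M) := by
  obtain ⟨c, ε, hε, hc, hdecay⟩ := matrix_decay M hM
  have hcont : Continuous fun t : ℝ => exp (t • M) :=
    exp_continuous.comp (continuous_id.smul continuous_const)
  have hint : IntegrableOn (fun t : ℝ => exp (t • M)) (Set.Ioi 0) := by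
    refine Integrable.mono' (((exp_neg_integrableOn_Ioi 0 hε)).const_mul c)
      hcont.aestronglyMeasurable ?_
    refine (ae_restrict_iff' measurableSet_Ioi).2 (Filter.Eventually.of_forall fun t ht => ?_)
    simpa [neg_mul] using hdecay t (le_of_lt ht)
  refine ⟨hint, ?_⟩
  have hgoal : (∫ t in Set.Ioi (0:ℝ), exp (t • M)) * M = -1 := ?_
  case _ => exact ⟨hgoal, Matrix.inv_eq_left_inv (by rw [Matrix.neg_mul, hgoal, neg_neg])⟩
  have hder : ∀ t : ℝ, HasDerivAt (fun u : ℝ => exp (u • M)) (exp (t • M) * M) t := by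
    intro t
    exact hasDerivAt_exp_smul_const M t
  have hFTC : ∀ T : ℝ, ∫ t in (0:ℝ)..T, exp (t • M) * M = exp (T • M) - 1 := by
    intro T
    rw [intervalIntegral.integral_eq_sub_of_hasDerivAt (fun t _ => hder t)
      ((hcont.mul continuous_const).intervalIntegrable 0 T)]
    simp
  have key1 : (∫ t in Set.Ioi (0:ℝ), exp (t • M)) * M = -1 := by
    set R : Matrix (Fin N) (Fin N) ℂ →L[ℝ] Matrix (Fin N) (Fin N) ℂ :=
      (ContinuousLinearMap.mul ℝ (Matrix (Fin N) (Fin N) ℂ)).flip M with hR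
    have h2 : Tendsto (fun T : ℝ => ∫ t in (0:ℝ)..T, exp (t • M)) atTop
        (nhds (∫ t in Set.Ioi (0:ℝ), exp (t • M))) :=
      intervalIntegral_tendsto_integral_Ioi 0 hint tendsto_id
    have h1 : Tendsto (fun T : ℝ => ∫ t in (0:ℝ)..T, exp (t • M) * M) atTop
        (nhds ((∫ t in Set.Ioi (0:ℝ), exp (t • M)) * M)) := by
      have h3 := (R.continuous.tendsto _).comp h2
      have h4 : (fun T : ℝ => R (∫ t in (0:ℝ)..T, exp (t • M)))
          = fun T : ℝ => ∫ t in (0:ℝ)..T, exp (t • M) * M := by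
        funext T
        exact (R.intervalIntegral_comp_comm (hcont.intervalIntegrable 0 T)).symm
      rw [← h4]
      exact h3
    have h5 : Tendsto (fun T : ℝ => exp (T • M) - 1) atTop (nhds ((0:Matrix (Fin N) (Fin N) ℂ) - 1)) := by
      refine Filter.Tendsto.sub_const ?_ 1
      refine squeeze_zero_norm' (a := fun T : ℝ => c * Real.exp (-ε * T)) ?_ ?_
      · exact (Filter.eventually_atTop.2 ⟨0, fun T hT => hdecay T hT⟩)
      · have h6 : Tendsto (fun T : ℝ => ε * T) atTop atTop :=
          Filter.Tendsto.const_mul_atTop hε tendsto_id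
        have h7 := (Real.tendsto_exp_neg_atTop_nhds_zero.comp h6).const_mul c
        simpa [neg_mul, mul_zero] using h7
    have := tendsto_nhds_unique (by rw [funext hFTC] at h1; exact h1) h5
    rw [this, zero_sub]
  exact key1

end HurwitzAux

namespace HurwitzAux
open MeasureTheory Filter Set

variable {n m r : ℕ}

/-- `X ↦ (C * X * B) j k` as a continuous `ℝ`-linear map. -/
noncomputable def entryCLM (Cc : Matrix (Fin r) (Fin n) ℂ) (Bc : Matrix (Fin n) (Fin m) ℂ)
    (j : Fin r) (k : Fin m) : Matrix (Fin n) (Fin n) ℂ →L[ℝ] ℂ :=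
  LinearMap.toContinuousLinearMap
    { toFun := fun X => (Cc * X * Bc) j k
      map_add' := fun X Y => by
        simp [Matrix.mul_add, Matrix.add_mul, Matrix.add_apply]
      map_smul' := fun t X => by
        show (Cc * (t • X) * Bc) j k = t • (Cc * X * Bc) j k
        rw [Matrix.mul_smul, Matrix.smul_mul, Matrix.smul_apply] }

@[simp] lemma entryCLM_apply (Cc : Matrix (Fin r) (Fin n) ℂ) (Bc : Matrix (Fin n) (Fin m) ℂ)
    (j : Fin r) (k : Fin m) (X : Matrix (Fin n) (Fin n) ℂ) :
    entryCLM Cc Bc j k X = (Cc * X * Bc) j k := rfl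

lemma entryCLM_smul (Cc : Matrix (Fin r) (Fin n) ℂ) (Bc : Matrix (Fin n) (Fin m) ℂ)
    (j : Fin r) (k : Fin m) (z : ℂ) (X : Matrix (Fin n) (Fin n) ℂ) :
    entryCLM Cc Bc j k (z • X) = z * entryCLM Cc Bc j k X := by
  rw [entryCLM_apply, entryCLM_apply, Matrix.mul_smul, Matrix.smul_mul, Matrix.smul_apply,
    smul_eq_mul]

/-- The complexified exponential. -/
lemma exp_map_ofReal (A : Matrix (Fin n) (Fin n) ℝ) (t : ℝ) :
    (exp (t • A)).map Complex.ofReal = exp (t • A.map Complex.ofReal) := by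
  have hcont : Continuous fun X : Matrix (Fin n) (Fin n) ℝ => X.map Complex.ofReal :=
    Continuous.matrix_map continuous_id Complex.continuous_ofReal
  have h1 := map_exp (Complex.ofRealHom.mapMatrix :
      Matrix (Fin n) (Fin n) ℝ →+* Matrix (Fin n) (Fin n) ℂ) hcont (t • A)
  have h2 : (Complex.ofRealHom.mapMatrix :
      Matrix (Fin n) (Fin n) ℝ →+* Matrix (Fin n) (Fin n) ℂ) (t • A)
      = t • A.map Complex.ofReal := by
    ext i j
    simp [RingHom.mapMatrix_apply, Matrix.map_apply, Matrix.smul_apply]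
  rw [h2] at h1
  rw [show ∀ X : Matrix (Fin n) (Fin n) ℝ, X.map Complex.ofReal
      = (Complex.ofRealHom.mapMatrix :
        Matrix (Fin n) (Fin n) ℝ →+* Matrix (Fin n) (Fin n) ℂ) X from fun _ => rfl, h1]

end HurwitzAux

namespace HurwitzAux
open MeasureTheory Filter Set

lemma map_mul_ofReal {a b c : ℕ} (P : Matrix (Fin a) (Fin b) ℝ) (Q : Matrix (Fin b) (Fin c) ℝ) :
    (P * Q).map Complex.ofReal = P.map Complex.ofReal * Q.map Complex.ofReal := by
  ext i j
  simp only [Matrix.mul_apply, Matrix.map_apply]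
  push_cast
  rfl

lemma exp_smul_sub_smul_one {n : ℕ} (Ac : Matrix (Fin n) (Fin n) ℂ) (z : ℂ) (t : ℝ) :
    exp (t • (Ac - z • 1)) = Complex.exp (-((t : ℂ) * z)) • exp (t • Ac) := by
  have e : (t : ℝ) • (z • (1 : Matrix (Fin n) (Fin n) ℂ)) = ((t : ℂ) * z) • 1 := by
    rw [← algebraMap_smul ℂ t (z • (1 : Matrix (Fin n) (Fin n) ℂ)), smul_smul,
      Complex.coe_algebraMap]
  have h1 : t • (Ac - z • 1) = t • Ac + (-((t : ℂ) * z)) • 1 := by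
    rw [smul_sub, e, neg_smul, ← sub_eq_add_neg]
  rw [h1, exp_add_smul_one]

theorem main {n m r : ℕ}
    (A : Matrix (Fin n) (Fin n) ℝ) (B : Matrix (Fin n) (Fin m) ℝ)
    (C : Matrix (Fin r) (Fin n) ℝ) (D : Matrix (Fin r) (Fin m) ℝ)
    (hA : A.Hurwitz)
    (hCeB : ∀ t : ℝ, 0 ≤ t → ∀ i j, 0 ≤ (C * NormedSpace.exp (t • A) * B) i j)
    (hD : ∀ i j, 0 ≤ D i j)
    (G : ℝ → Matrix (Fin r) (Fin m) ℂ)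
    (hG : ∀ ω : ℝ, G ω = C.map Complex.ofReal *
        (((ω : ℂ) * Complex.I) • (1 : Matrix (Fin n) (Fin n) ℂ) - A.map Complex.ofReal)⁻¹ *
        B.map Complex.ofReal + D.map Complex.ofReal) :
    (∀ j k, 0 ≤ (D - C * A⁻¹ * B) j k) ∧
    (∀ (ω : ℝ) (j : Fin r) (k : Fin m), ‖G ω j k‖ ≤ (D - C * A⁻¹ * B) j k) ∧
    (∀ (ω : ℝ) (w : Fin m → ℂ) (j : Fin r),
      ‖(G ω *ᵥ w) j‖ ≤ ((D - C * A⁻¹ * B) *ᵥ fun k => ‖w k‖) j) := by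
  classical
  set Ac := A.map Complex.ofReal with hAc
  set Bc := B.map Complex.ofReal with hBc
  set Cc := C.map Complex.ofReal with hCc
  set Mc : ℝ → Matrix (Fin n) (Fin n) ℂ :=
    fun ω => Ac - ((ω : ℂ) * Complex.I) • 1 with hMc
  -- all eigenvalues of `Mc ω` have negative real part
  have hspec : ∀ ω : ℝ, ∀ μ ∈ spectrum ℂ (Mc ω), μ.re < 0 := by
    intro ω μ hμ
    rw [spectrum.mem_iff] at hμ
    have hmem : μ + (ω : ℂ) * Complex.I ∈ spectrum ℂ Ac := by
      rw [spectrum.mem_iff]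
      convert hμ using 2
      rw [hMc]
      rw [Algebra.algebraMap_eq_smul_one, Algebra.algebraMap_eq_smul_one, add_smul]
      exact (sub_sub_eq_add_sub _ _ _).symm
    have hlt := hA _ hmem
    have h0 : ((ω : ℂ) * Complex.I).re = 0 := by simp
    rw [Complex.add_re, h0, add_zero] at hlt
    exact hlt
  have hkey := fun ω : ℝ => key_integral (Mc ω) (hspec ω)
  -- the resolvent as an integral
  have hres : ∀ ω : ℝ, (((ω : ℂ) * Complex.I) • (1 : Matrix (Fin n) (Fin n) ℂ) - Ac)⁻¹
      = ∫ t in Set.Ioi (0:ℝ), exp (t • Mc ω) := by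
    intro ω
    refine Matrix.inv_eq_left_inv ?_
    have h1 : ((ω : ℂ) * Complex.I) • (1 : Matrix (Fin n) (Fin n) ℂ) - Ac = -(Mc ω) := by
      rw [hMc]; exact (neg_sub _ _).symm
    rw [h1, Matrix.mul_neg, (hkey ω).2.1, neg_neg]
  -- the complexified integrand
  have hintg : ∀ ω : ℝ, ∀ t : ℝ, ∀ j k,
      entryCLM Cc Bc j k (exp (t • Mc ω))
        = Complex.exp (-((t : ℂ) * ((ω : ℂ) * Complex.I)))
          * ((C * NormedSpace.exp (t • A) * B) j k : ℝ) := by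
    intro ω t j k
    rw [hMc]
    rw [exp_smul_sub_smul_one, entryCLM_smul]
    congr 1
    rw [← exp_map_ofReal, entryCLM_apply, hCc, hBc]
    rw [← map_mul_ofReal, ← map_mul_ofReal]
    rfl
  -- nonnegativity of the real integrand
  set g : Fin r → Fin m → ℝ → ℝ :=
    fun j k t => (C * NormedSpace.exp (t • A) * B) j k with hg
  -- integrability of the composed integrand
  have hφint : ∀ ω : ℝ, ∀ j k, Integrable
      (fun t : ℝ => entryCLM Cc Bc j k (exp (t • Mc ω)))
      (volume.restrict (Set.Ioi (0:ℝ))) :=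
    fun ω j k => (entryCLM Cc Bc j k).integrable_comp ((hkey ω).1)
  have hgint : ∀ j k, IntegrableOn (fun t => g j k t) (Set.Ioi (0:ℝ)) := by
    intro j k
    have h0 : (fun t : ℝ => entryCLM Cc Bc j k (exp (t • Mc 0)))
        = fun t : ℝ => ((g j k t : ℝ) : ℂ) := by
      funext t
      rw [hintg 0 t j k]
      simp [hg]
    have h1 := hφint 0 j k
    rw [h0] at h1
    simpa [IntegrableOn] using h1.re
  -- entry formula
  have hentry : ∀ ω : ℝ, ∀ j k,
      (Cc * (((ω : ℂ) * Complex.I) • (1 : Matrix (Fin n) (Fin n) ℂ) - Ac)⁻¹ * Bc) j k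
        = ∫ t in Set.Ioi (0:ℝ), entryCLM Cc Bc j k (exp (t • Mc ω)) := by
    intro ω j k
    rw [hres ω]
    exact ((entryCLM Cc Bc j k).integral_comp_comm ((hkey ω).1)).symm
  -- value at zero
  have hI0 : ∀ j k, (Cc * ((((0:ℝ) : ℂ) * Complex.I) • (1 : Matrix (Fin n) (Fin n) ℂ) - Ac)⁻¹ * Bc) j k
      = ((∫ t in Set.Ioi (0:ℝ), g j k t : ℝ) : ℂ) := by
    intro j k
    rw [hentry 0 j k]
    have h0 : (fun t : ℝ => entryCLM Cc Bc j k (exp (t • Mc 0)))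
        = fun t : ℝ => ((g j k t : ℝ) : ℂ) := by
      funext t
      rw [hintg 0 t j k]
      simp [hg]
    rw [h0]
    exact integral_ofReal
  -- A is invertible and the inverse maps across
  have hAcAc : Ac⁻¹ * Ac = 1 := by
    have h1 : (Mc 0) = Ac := by rw [hMc]; simp
    have h2 := (hkey 0).2.2
    rw [h1] at h2
    rw [h2, Matrix.neg_mul, ← h1, (hkey 0).2.1, neg_neg]
  have hAdet : IsUnit A.det := by
    have h1 : IsUnit Ac.det := Matrix.isUnit_det_of_left_inverse hAcAc
    have h2 : Ac.det = ((A.det : ℝ) : ℂ) := by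
      rw [hAc, show A.map Complex.ofReal = Complex.ofRealHom.mapMatrix A from rfl,
        ← RingHom.map_det]
      rfl
    rw [h2] at h1
    have h3 : ((A.det : ℝ) : ℂ) ≠ 0 := h1.ne_zero
    rw [isUnit_iff_ne_zero]
    intro h4
    exact h3 (by rw [h4]; simp)
  have hmapinv : Ac⁻¹ = (A⁻¹).map Complex.ofReal := by
    refine Matrix.inv_eq_left_inv ?_
    rw [hAc, ← map_mul_ofReal, Matrix.nonsing_inv_mul A hAdet]
    ext i j
    simp only [Matrix.map_apply, Matrix.one_apply]
    split <;> simp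
  -- identify the static gain
  have hstat : ∀ j k, (∫ t in Set.Ioi (0:ℝ), g j k t) = -(C * A⁻¹ * B) j k := by
    intro j k
    have h1 := hI0 j k
    have h2 : ((((0:ℝ) : ℂ) * Complex.I) • (1 : Matrix (Fin n) (Fin n) ℂ) - Ac)⁻¹ = -(Ac⁻¹) := by
      refine Matrix.inv_eq_left_inv ?_
      rw [show (((0:ℝ) : ℂ) * Complex.I) = (0 : ℂ) by simp, zero_smul, zero_sub,
        Matrix.neg_mul, Matrix.mul_neg, hAcAc, neg_neg]
    rw [h2, hmapinv] at h1
    have h3 : (Cc * -((A⁻¹).map Complex.ofReal) * Bc) j k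
        = ((-(C * A⁻¹ * B) j k : ℝ) : ℂ) := by
      rw [Matrix.mul_neg, Matrix.neg_mul, hCc, hBc, ← map_mul_ofReal, ← map_mul_ofReal]
      simp [Matrix.neg_apply, Matrix.map_apply]
    rw [h3] at h1
    exact_mod_cast h1.symm
  have hI0nonneg : ∀ j k, 0 ≤ ∫ t in Set.Ioi (0:ℝ), g j k t := by
    intro j k
    refine setIntegral_nonneg measurableSet_Ioi fun t ht => ?_
    exact hCeB t (le_of_lt ht) j k
  have hRHS : ∀ j k, (D - C * A⁻¹ * B) j k = D j k + ∫ t in Set.Ioi (0:ℝ), g j k t := by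
    intro j k
    rw [hstat j k, Matrix.sub_apply, sub_eq_add_neg]
  have part1 : ∀ j k, 0 ≤ (D - C * A⁻¹ * B) j k := by
    intro j k
    rw [hRHS j k]
    exact add_nonneg (hD j k) (hI0nonneg j k)
  -- the norm of the integrand is `g`
  have hnorm : ∀ ω : ℝ, ∀ j k, ∀ t ∈ Set.Ioi (0:ℝ),
      ‖entryCLM Cc Bc j k (exp (t • Mc ω))‖ = g j k t := by
    intro ω j k t ht
    rw [hintg ω t j k, norm_mul]
    have h1 : ‖Complex.exp (-((t : ℂ) * ((ω : ℂ) * Complex.I)))‖ = 1 := by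
      rw [Complex.norm_exp]
      have h2 : (-((t : ℂ) * ((ω : ℂ) * Complex.I))).re = 0 := by simp
      rw [h2, Real.exp_zero]
    rw [h1, one_mul, Complex.norm_real, Real.norm_eq_abs,
      abs_of_nonneg (hCeB t (le_of_lt ht) j k)]
  have part2 : ∀ (ω : ℝ) (j : Fin r) (k : Fin m),
      ‖G ω j k‖ ≤ (D - C * A⁻¹ * B) j k := by
    intro ω j k
    rw [hG ω]
    have h1 : (Cc * (((ω : ℂ) * Complex.I) • (1 : Matrix (Fin n) (Fin n) ℂ) - Ac)⁻¹ * Bc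
        + D.map Complex.ofReal) j k
        = (Cc * (((ω : ℂ) * Complex.I) • (1 : Matrix (Fin n) (Fin n) ℂ) - Ac)⁻¹ * Bc) j k
          + ((D j k : ℝ) : ℂ) := by
      rw [Matrix.add_apply]
      rfl
    rw [h1]
    calc ‖(Cc * (((ω : ℂ) * Complex.I) • (1 : Matrix (Fin n) (Fin n) ℂ) - Ac)⁻¹ * Bc) j k
            + ((D j k : ℝ) : ℂ)‖
        ≤ ‖(Cc * (((ω : ℂ) * Complex.I) • (1 : Matrix (Fin n) (Fin n) ℂ) - Ac)⁻¹ * Bc) j k‖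
          + ‖((D j k : ℝ) : ℂ)‖ := norm_add_le _ _
      _ ≤ (∫ t in Set.Ioi (0:ℝ), g j k t) + D j k := by
          refine add_le_add ?_ ?_
          · rw [hentry ω j k]
            refine le_trans (norm_integral_le_integral_norm _) (le_of_eq ?_)
            exact setIntegral_congr_fun measurableSet_Ioi fun t ht => hnorm ω j k t ht
          · rw [Complex.norm_real, Real.norm_eq_abs, abs_of_nonneg (hD j k)]
      _ = (D - C * A⁻¹ * B) j k := by rw [hRHS j k]; ring
  refine ⟨part1, part2, ?_⟩
  intro ω w j
  have h1 : (G ω *ᵥ w) j = ∑ k, G ω j k * w k := by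
    simp [Matrix.mulVec, dotProduct]
  have h2 : ((D - C * A⁻¹ * B) *ᵥ fun k => ‖w k‖) j
      = ∑ k, (D - C * A⁻¹ * B) j k * ‖w k‖ := by
    simp [Matrix.mulVec, dotProduct]
  rw [h1, h2]
  refine le_trans (norm_sum_le _ _) (Finset.sum_le_sum fun k _ => ?_)
  rw [norm_mul]
  exact mul_le_mul_of_nonneg_right (part2 ω j k) (norm_nonneg _)

end HurwitzAux

end HurwitzAuxSection

/-- For a Hurwitz `A` with `C e^{At} B ≥ 0` for `t ≥ 0` and `D ≥ 0`, the transfer matrix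
`G(iω) = C (iωI - A)⁻¹ B + D` satisfies `|G(iω)ⱼₖ| ≤ G(0)ⱼₖ` where `G(0) = D - C A⁻¹ B`
has nonnegative entries, and consequently `|G(iω) w| ≤ G(0) |w|` entrywise for all
complex `w`. -/
theorem transfer_matrix_dominated_by_static_gain {n m r : ℕ}
    (A : Matrix (Fin n) (Fin n) ℝ) (B : Matrix (Fin n) (Fin m) ℝ)
    (C : Matrix (Fin r) (Fin n) ℝ) (D : Matrix (Fin r) (Fin m) ℝ)
    (hA : A.Hurwitz)
    (hCeB : ∀ t : ℝ, 0 ≤ t → ∀ i j, 0 ≤ (C * NormedSpace.exp (t • A) * B) i j)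
    (hD : ∀ i j, 0 ≤ D i j)
    (G : ℝ → Matrix (Fin r) (Fin m) ℂ)
    (hG : ∀ ω : ℝ, G ω = C.map Complex.ofReal *
        (((ω : ℂ) * Complex.I) • (1 : Matrix (Fin n) (Fin n) ℂ) - A.map Complex.ofReal)⁻¹ *
        B.map Complex.ofReal + D.map Complex.ofReal) :
    (∀ j k, 0 ≤ (D - C * A⁻¹ * B) j k) ∧
    (∀ (ω : ℝ) (j : Fin r) (k : Fin m), ‖G ω j k‖ ≤ (D - C * A⁻¹ * B) j k) ∧
    (∀ (ω : ℝ) (w : Fin m → ℂ) (j : Fin r),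
      ‖(G ω *ᵥ w) j‖ ≤ ((D - C * A⁻¹ * B) *ᵥ fun k => ‖w k‖) j) := by
  exact HurwitzAux.main A B C D hA hCeB hD G hG
end

section
/- Let A ∈ ℝ^{n×n} be Metzler and let B ∈ ℝ^{n×m}, C ∈ ℝ^{r×n}, D ∈ ℝ^{r×m} have nonnegative entries, and let γ > 0. Then the following are equivalent: (1) A is Hurwitz and (D − C A⁻¹ B)·𝟏 < γ·𝟏 entrywise (this condition expresses that the L∞-induced input-output gain of the system ẋ = Ax + Bw, y = Cx + Dw is less than γ, since for such positive systems the induced gain equals the static gain D − CA⁻¹B); (2) there exists ξ ∈ ℝ^n with ξ ≥ 0 such that Aξ + B·𝟏 < 0 and Cξ + D·𝟏 < γ·𝟏 entrywise. -/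
open Matrix

namespace PosSysAux

/-- Entrywise nonnegativity. -/
def NN {p q : ℕ} (M : Matrix (Fin p) (Fin q) ℝ) : Prop := ∀ i j, 0 ≤ M i j

variable {n : ℕ}

lemma NN.mul {p q r : ℕ} {M : Matrix (Fin p) (Fin q) ℝ} {N : Matrix (Fin q) (Fin r) ℝ}
    (hM : NN M) (hN : NN N) : NN (M * N) := fun i j => by
  rw [Matrix.mul_apply]
  exact Finset.sum_nonneg fun k _ => mul_nonneg (hM i k) (hN k j)

lemma NN.pow {M : Matrix (Fin n) (Fin n) ℝ} (hM : NN M) : ∀ k, NN (M ^ k)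
  | 0 => by
      intro i j
      rw [pow_zero]
      rcases eq_or_ne i j with h | h <;> simp [Matrix.one_apply, h]
  | (k + 1) => by
      rw [pow_succ]
      exact (hM.pow k).mul hM

lemma NN.smul {c : ℝ} (hc : 0 ≤ c) {M : Matrix (Fin n) (Fin n) ℝ} (hM : NN M) : NN (c • M) :=
  fun i j => mul_nonneg hc (hM i j)

lemma NN.neg_mul_neg {p q r : ℕ} {M : Matrix (Fin p) (Fin q) ℝ} {N : Matrix (Fin q) (Fin r) ℝ}
    (hM : NN M) (hN : NN (-N)) : NN (-(M * N)) := by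
  have := hM.mul hN
  rwa [Matrix.mul_neg] at this

lemma mulVec_nonneg {p q : ℕ} {M : Matrix (Fin p) (Fin q) ℝ} (hM : NN M) {v : Fin q → ℝ}
    (hv : ∀ j, 0 ≤ v j) : ∀ i, 0 ≤ (M *ᵥ v) i := fun i =>
  show (0:ℝ) ≤ ∑ j, M i j * v j from
    Finset.sum_nonneg fun j _ => mul_nonneg (hM i j) (hv j)

section Normed

attribute [local instance] Matrix.linftyOpNormedAddCommGroup Matrix.linftyOpNormedRing
  Matrix.linftyOpNormedAlgebra Matrix.linftyOpIsBoundedSMul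

lemma entry_abs_le_norm (M : Matrix (Fin n) (Fin n) ℝ) (i j : Fin n) : |M i j| ≤ ‖M‖ := by
  rw [Matrix.linfty_opNorm_def]
  have h1 : ‖M i j‖₊ ≤ ∑ k, ‖M i k‖₊ :=
    Finset.single_le_sum (f := fun k => ‖M i k‖₊) (fun _ _ => by positivity) (Finset.mem_univ j)
  have h2 : (∑ k, ‖M i k‖₊) ≤ Finset.univ.sup fun i => ∑ j, ‖M i j‖₊ :=
    Finset.le_sup (f := fun i => ∑ j, ‖M i j‖₊) (Finset.mem_univ i)
  have := h1.trans h2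
  exact_mod_cast this

/-- The entry evaluation as a bundled additive monoid hom. -/
def entryHom (i j : Fin n) : Matrix (Fin n) (Fin n) ℝ →+ ℝ where
  toFun M := M i j
  map_zero' := rfl
  map_add' _ _ := rfl

lemma continuous_entryHom (i j : Fin n) : Continuous (entryHom i j) :=
  AddMonoidHomClass.continuous_of_bound (entryHom i j) 1 fun M => by
    rw [one_mul, Real.norm_eq_abs]; exact entry_abs_le_norm M i j

lemma NN.ringInverse_one_sub {Y : Matrix (Fin n) (Fin n) ℝ} (hY : NN Y) (h : ‖Y‖ < 1) :
    NN (Ring.inverse (1 - Y)) := by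
  intro i j
  have hs : HasSum (fun k : ℕ => entryHom i j (Y ^ k)) (entryHom i j (Ring.inverse (1 - Y))) :=
    (hasSum_geom_series_inverse Y h).map (entryHom i j) (continuous_entryHom i j)
  exact hs.nonneg fun k => hY.pow k i j

lemma ringInverse_eq {X Y : Matrix (Fin n) (Fin n) ℝ} (h1 : X * Y = 1) (h2 : Y * X = 1) :
    Ring.inverse X = Y :=
  Ring.inverse_unit ⟨X, Y, h1, h2⟩

lemma shifted_isUnit {A : Matrix (Fin n) (Fin n) ℝ} (hH : A.Hurwitz) {s : ℝ} (hs : 0 ≤ s) :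
    IsUnit (A - s • (1 : Matrix (Fin n) (Fin n) ℝ)) := by
  rw [Matrix.isUnit_iff_isUnit_det, isUnit_iff_ne_zero]
  intro hdet
  have hmap : (A.map Complex.ofReal) - (s : ℂ) • (1 : Matrix (Fin n) (Fin n) ℂ)
      = (A - s • (1 : Matrix (Fin n) (Fin n) ℝ)).map Complex.ofReal := by
    ext i j
    rcases eq_or_ne i j with h | h <;>
      simp [Matrix.map_apply, Matrix.one_apply, h]
  have hdet' : ((A - s • (1 : Matrix (Fin n) (Fin n) ℝ)).map Complex.ofReal).det = 0 := by
    have h0 : (A - s • (1 : Matrix (Fin n) (Fin n) ℝ)).map Complex.ofReal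
        = Complex.ofRealHom.mapMatrix (A - s • (1 : Matrix (Fin n) (Fin n) ℝ)) := rfl
    rw [h0, ← RingHom.map_det, hdet, map_zero]
  have hspec : (s : ℂ) ∈ spectrum ℂ (A.map Complex.ofReal) := by
    rw [spectrum.mem_iff, Algebra.algebraMap_eq_smul_one, Matrix.isUnit_iff_isUnit_det,
      isUnit_iff_ne_zero, not_not]
    have heq : (s : ℂ) • (1 : Matrix (Fin n) (Fin n) ℂ) - A.map Complex.ofReal
        = -((A - s • (1 : Matrix (Fin n) (Fin n) ℝ)).map Complex.ofReal) := by
      rw [← hmap]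
      exact (neg_sub _ _).symm
    rw [heq, Matrix.det_neg, hdet', mul_zero]
  have := hH _ hspec
  simp only [Complex.ofReal_re] at this
  linarith

lemma step_nonneg {A : Matrix (Fin n) (Fin n) ℝ} {s s' : ℝ}
    (hXu : IsUnit (A - s • (1 : Matrix (Fin n) (Fin n) ℝ))) (hs' : s' ≤ s)
    (hlt : (s - s') * ‖Ring.inverse (A - s • (1 : Matrix (Fin n) (Fin n) ℝ))‖ < 1)
    (hNs : NN (-(Ring.inverse (A - s • (1 : Matrix (Fin n) (Fin n) ℝ))))) :
    NN (-(Ring.inverse (A - s' • (1 : Matrix (Fin n) (Fin n) ℝ)))) := by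
  set X : Matrix (Fin n) (Fin n) ℝ := A - s • (1 : Matrix (Fin n) (Fin n) ℝ) with hX
  set V : Matrix (Fin n) (Fin n) ℝ := Ring.inverse X with hV
  have hXV : X * V = 1 := Ring.mul_inverse_cancel _ hXu
  have hVX : V * X = 1 := Ring.inverse_mul_cancel _ hXu
  set Y : Matrix (Fin n) (Fin n) ℝ := (s - s') • (-V) with hY
  have hYnn : NN Y := NN.smul (by linarith) hNs
  have hYlt : ‖Y‖ < 1 := by
    rw [hY, norm_smul, Real.norm_eq_abs, abs_of_nonneg (by linarith : (0:ℝ) ≤ s - s'), norm_neg]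
    exact hlt
  have hWu : IsUnit ((1 : Matrix (Fin n) (Fin n) ℝ) - Y) := isUnit_one_sub_of_norm_lt_one hYlt
  set W : Matrix (Fin n) (Fin n) ℝ := Ring.inverse ((1 : Matrix (Fin n) (Fin n) ℝ) - Y) with hW
  have hW1 : ((1 : Matrix (Fin n) (Fin n) ℝ) - Y) * W = 1 := Ring.mul_inverse_cancel _ hWu
  have hW2 : W * ((1 : Matrix (Fin n) (Fin n) ℝ) - Y) = 1 := Ring.inverse_mul_cancel _ hWu
  have hfact : A - s' • (1 : Matrix (Fin n) (Fin n) ℝ) = X * ((1 : Matrix (Fin n) (Fin n) ℝ) - Y) := by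
    have h1 : X * ((1 : Matrix (Fin n) (Fin n) ℝ) - Y) = X - (s - s') • (X * (-V)) := by
      rw [mul_sub, mul_one, hY, mul_smul_comm]
    rw [h1, mul_neg, hXV, hX]
    ext i j
    simp only [Matrix.sub_apply, Matrix.smul_apply, Matrix.neg_apply, Matrix.one_apply,
      smul_eq_mul]
    rcases eq_or_ne i j with h | h <;> simp [h] <;> ring
  have hinv : Ring.inverse (A - s' • (1 : Matrix (Fin n) (Fin n) ℝ)) = W * V := by
    apply ringInverse_eq
    · rw [hfact, mul_assoc, ← mul_assoc ((1 : Matrix (Fin n) (Fin n) ℝ) - Y) W V, hW1, one_mul,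
        hXV]
    · rw [hfact, mul_assoc W V _, ← mul_assoc V X _, hVX, one_mul, hW2]
  rw [hinv, ← Matrix.mul_neg]
  exact (hYnn.ringInverse_one_sub hYlt).mul hNs

lemma inv_entries_nonpos {A : Matrix (Fin n) (Fin n) ℝ} (hMz : A.Metzler) (hH : A.Hurwitz) :
    NN (-(A⁻¹)) := by
  classical
  -- the nonnegative shift
  set P : Matrix (Fin n) (Fin n) ℝ := A + ‖A‖ • (1 : Matrix (Fin n) (Fin n) ℝ) with hPdef
  have hPnn : NN P := by
    intro i j
    rcases eq_or_ne i j with h | h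
    · subst h
      have := entry_abs_le_norm A i i
      simp only [hPdef, Matrix.add_apply, Matrix.smul_apply, Matrix.one_apply_eq, smul_eq_mul,
        mul_one]
      rcases abs_le.1 this with ⟨h1, _⟩
      linarith
    · simpa [hPdef, Matrix.add_apply, Matrix.smul_apply, Matrix.one_apply_ne h] using hMz i j h
  set S : ℝ := ‖A‖ + ‖P‖ + 1 with hSdef
  have hS0 : 0 < S := by positivity
  set σ : ℝ := ‖A‖ + S with hσdef
  have hσ0 : 0 < σ := by positivity
  set Y₀ : Matrix (Fin n) (Fin n) ℝ := σ⁻¹ • P with hY₀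
  have hY₀nn : NN Y₀ := fun i j => mul_nonneg (by positivity) (hPnn i j)
  have hY₀lt : ‖Y₀‖ < 1 := by
    rw [hY₀, norm_smul, norm_inv, Real.norm_eq_abs, abs_of_pos hσ0, inv_mul_lt_iff₀ hσ0, mul_one,
      hσdef, hSdef]
    linarith [norm_nonneg A]
  have hfact : A - S • (1 : Matrix (Fin n) (Fin n) ℝ)
      = (-σ) • ((1 : Matrix (Fin n) (Fin n) ℝ) - Y₀) := by
    rw [hY₀, smul_sub, smul_smul, neg_mul, mul_inv_cancel₀ hσ0.ne', hPdef, hσdef]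
    ext i j
    simp only [Matrix.sub_apply, Matrix.smul_apply, Matrix.neg_apply, Matrix.add_apply,
      Matrix.one_apply, smul_eq_mul]
    rcases eq_or_ne i j with h | h <;> simp [h] <;> ring
  have hWu : IsUnit ((1 : Matrix (Fin n) (Fin n) ℝ) - Y₀) := isUnit_one_sub_of_norm_lt_one hY₀lt
  have hbase : NN (-(Ring.inverse (A - S • (1 : Matrix (Fin n) (Fin n) ℝ)))) := by
    set W : Matrix (Fin n) (Fin n) ℝ := Ring.inverse ((1 : Matrix (Fin n) (Fin n) ℝ) - Y₀) with hW
    have hRS : Ring.inverse (A - S • (1 : Matrix (Fin n) (Fin n) ℝ)) = (-σ⁻¹) • W := by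
      apply ringInverse_eq
      · rw [hfact, smul_mul_smul_comm, neg_mul_neg, mul_inv_cancel₀ hσ0.ne', one_smul,
          Ring.mul_inverse_cancel _ hWu]
      · rw [hfact, smul_mul_smul_comm, neg_mul_neg, inv_mul_cancel₀ hσ0.ne', one_smul,
          Ring.inverse_mul_cancel _ hWu]
    rw [hRS, show -(-σ⁻¹ • W) = σ⁻¹ • W from by simp]
    exact NN.smul (by positivity) (hY₀nn.ringInverse_one_sub hY₀lt)
  have hunit : ∀ s : ℝ, 0 ≤ s → IsUnit (A - s • (1 : Matrix (Fin n) (Fin n) ℝ)) :=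
    fun s hs => shifted_isUnit hH hs
  -- uniform bound on the resolvent norm on [0, S]
  have hcont : ContinuousOn
      (fun s : ℝ => Ring.inverse (A - s • (1 : Matrix (Fin n) (Fin n) ℝ))) (Set.Icc 0 S) := by
    intro s hs
    have h1 : ContinuousAt (fun t : ℝ => A - t • (1 : Matrix (Fin n) (Fin n) ℝ)) s :=
      (continuous_const.sub (continuous_id.smul continuous_const)).continuousAt
    have h2 : ContinuousAt Ring.inverse (A - s • (1 : Matrix (Fin n) (Fin n) ℝ)) := by
      have := NormedRing.inverse_continuousAt (hunit s hs.1).unit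
      rwa [IsUnit.unit_spec] at this
    have h3 : ContinuousAt
        (fun t : ℝ => Ring.inverse (A - t • (1 : Matrix (Fin n) (Fin n) ℝ))) s :=
      ContinuousAt.comp (g := Ring.inverse)
        (f := fun t : ℝ => A - t • (1 : Matrix (Fin n) (Fin n) ℝ)) (x := s) h2 h1
    exact h3.continuousWithinAt
  obtain ⟨K, hK⟩ := isCompact_Icc.exists_bound_of_continuousOn hcont
  set K₀ : ℝ := max K 0 with hK₀
  have hK₀0 : 0 ≤ K₀ := le_max_right _ _
  set δ : ℝ := (K₀ + 1)⁻¹ with hδ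
  have hδ0 : 0 < δ := by positivity
  -- walking the resolvent down from S to 0
  have hchain : ∀ k : ℕ,
      NN (-(Ring.inverse (A - (max (S - k * δ) 0) • (1 : Matrix (Fin n) (Fin n) ℝ)))) := by
    intro k
    induction k with
    | zero => simpa [max_eq_left hS0.le] using hbase
    | succ k ih =>
        set a : ℝ := max (S - k * δ) 0 with ha
        set b : ℝ := max (S - (k + 1 : ℕ) * δ) 0 with hb
        have ha0 : 0 ≤ a := le_max_right _ _
        have haS : a ≤ S := max_le (by nlinarith [hδ0.le, Nat.cast_nonneg (α := ℝ) k]) hS0.le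
        have hb0 : 0 ≤ b := le_max_right _ _
        have hba : b ≤ a := by
          apply max_le_max_right
          push_cast
          nlinarith [hδ0.le]
        have hab : a - b ≤ δ := by
          rw [ha, hb]
          push_cast
          rcases le_total (S - k * δ) 0 with h | h <;>
            rcases le_total (S - (k + 1) * δ) 0 with h' | h' <;>
            simp only [max_eq_right h, max_eq_left h, max_eq_right h', max_eq_left h'] <;>
            nlinarith [hδ0.le]
        apply step_nonneg (hunit a ha0) hba _ ih
        have hnorm : ‖Ring.inverse (A - a • (1 : Matrix (Fin n) (Fin n) ℝ))‖ ≤ K₀ :=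
          le_trans (hK _ ⟨ha0, haS⟩) (le_max_left _ _)
        calc (a - b) * ‖Ring.inverse (A - a • (1 : Matrix (Fin n) (Fin n) ℝ))‖
            ≤ δ * K₀ := mul_le_mul hab hnorm (norm_nonneg _) hδ0.le
          _ < 1 := by
              rw [hδ, inv_mul_lt_iff₀ (by positivity), mul_one]
              linarith
  obtain ⟨k, hk⟩ := exists_nat_ge (S / δ)
  have hzero : max (S - k * δ) 0 = 0 := by
    apply max_eq_right
    rw [div_le_iff₀ hδ0] at hk
    linarith
  have h0 := hchain k
  rw [hzero, zero_smul, sub_zero, ← Matrix.nonsing_inv_eq_ringInverse] at h0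
  exact h0

end Normed

lemma hurwitz_of_exists {A : Matrix (Fin n) (Fin n) ℝ} (hMz : A.Metzler) {ξ : Fin n → ℝ}
    (hξ : ∀ i, 0 ≤ ξ i) (h : ∀ i, (A *ᵥ ξ) i < 0) : A.Hurwitz := by
  classical
  have hpos : ∀ i, 0 < ξ i := by
    intro i
    rcases (hξ i).lt_or_eq with h' | h'
    · exact h'
    · exfalso
      have h0 : 0 ≤ (A *ᵥ ξ) i := by
        show (0:ℝ) ≤ ∑ j, A i j * ξ j
        apply Finset.sum_nonneg
        intro j _
        rcases eq_or_ne j i with hji | hji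
        · subst hji; rw [← h', mul_zero]
        · exact mul_nonneg (hMz i j (Ne.symm hji)) (hξ j)
      exact absurd (h i) (not_lt.2 h0)
  intro μ hμ
  rw [spectrum.mem_iff, Algebra.algebraMap_eq_smul_one, Matrix.isUnit_iff_isUnit_det,
    isUnit_iff_ne_zero, not_not] at hμ
  obtain ⟨v, hv0, hv⟩ := Matrix.exists_mulVec_eq_zero_iff.2 hμ
  have heig : (A.map Complex.ofReal) *ᵥ v = μ • v := by
    rw [Matrix.sub_mulVec, Matrix.smul_mulVec, Matrix.one_mulVec, sub_eq_zero] at hv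
    exact hv.symm
  obtain ⟨j₀, hj₀⟩ := Function.ne_iff.1 hv0
  set f : Fin n → ℝ := fun j => ‖v j‖ / ξ j with hf
  obtain ⟨k, -, hk⟩ := Finset.exists_max_image Finset.univ f ⟨j₀, Finset.mem_univ j₀⟩
  have hfk : 0 < f k := by
    refine lt_of_lt_of_le ?_ (hk j₀ (Finset.mem_univ j₀))
    exact div_pos (norm_pos_iff.mpr hj₀) (hpos j₀)
  have habs : ∀ j, ‖v j‖ ≤ f k * ξ j := by
    intro j
    have : f j * ξ j ≤ f k * ξ j := mul_le_mul_of_nonneg_right (hk j (Finset.mem_univ j)) (hξ j)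
    rwa [hf, div_mul_cancel₀ _ (hpos j).ne'] at this
  have habsk : ‖v k‖ = f k * ξ k := by
    rw [hf, div_mul_cancel₀ _ (hpos k).ne']
  -- the k-th row of the eigen equation
  have hrow : (μ - (A k k : ℂ)) * v k = ∑ j ∈ Finset.univ.erase k, (A k j : ℂ) * v j := by
    have h1 : ∑ j, (A k j : ℂ) * v j = μ * v k := by
      have := congrFun heig k
      simpa [Matrix.mulVec, dotProduct, Matrix.map_apply, Pi.smul_apply, smul_eq_mul] using this
    have h2 : (A k k : ℂ) * v k + ∑ j ∈ Finset.univ.erase k, (A k j : ℂ) * v j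
        = ∑ j, (A k j : ℂ) * v j :=
      Finset.add_sum_erase _ (fun j => (A k j : ℂ) * v j) (Finset.mem_univ k)
    rw [h1] at h2
    rw [sub_mul]
    linear_combination -h2
  set Rk : ℝ := ∑ j ∈ Finset.univ.erase k, A k j * ξ j with hRk
  have hineq : ‖μ - (A k k : ℂ)‖ * (f k * ξ k) ≤ f k * Rk := by
    rw [← habsk, ← norm_mul, hrow]
    calc ‖∑ j ∈ Finset.univ.erase k, (A k j : ℂ) * v j‖
        ≤ ∑ j ∈ Finset.univ.erase k, ‖(A k j : ℂ) * v j‖ :=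
          norm_sum_le _ _
      _ ≤ ∑ j ∈ Finset.univ.erase k, A k j * (f k * ξ j) := by
          apply Finset.sum_le_sum
          intro j hj
          have hAkj : 0 ≤ A k j := hMz k j (Finset.ne_of_mem_erase hj).symm
          rw [norm_mul, Complex.norm_real, Real.norm_eq_abs, abs_of_nonneg hAkj]
          exact mul_le_mul_of_nonneg_left (habs j) hAkj
      _ = f k * Rk := by rw [hRk, Finset.mul_sum]; exact Finset.sum_congr rfl fun j _ => by ring
  have hineq2 : ‖μ - (A k k : ℂ)‖ * ξ k ≤ Rk := by
    have h' := hineq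
    rw [show ‖μ - (A k k : ℂ)‖ * (f k * ξ k)
      = f k * (‖μ - (A k k : ℂ)‖ * ξ k) from by ring] at h'
    exact le_of_mul_le_mul_left h' hfk
  have hrowlt : A k k * ξ k + Rk < 0 := by
    have h' := h k
    rw [show (A *ᵥ ξ) k = ∑ j, A k j * ξ j from rfl,
      ← Finset.add_sum_erase _ (fun j => A k j * ξ j) (Finset.mem_univ k)] at h'
    exact h'
  have habsμ : ‖μ - (A k k : ℂ)‖ < -(A k k) := by
    have h1 : ‖μ - (A k k : ℂ)‖ * ξ k < -(A k k) * ξ k := by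
      calc ‖μ - (A k k : ℂ)‖ * ξ k ≤ Rk := hineq2
        _ < -(A k k) * ξ k := by linarith
    exact lt_of_mul_lt_mul_right h1 (hξ k)
  have hre := Complex.re_le_norm (μ - (A k k : ℂ))
  simp only [Complex.sub_re, Complex.ofReal_re] at hre
  linarith

end PosSysAux

open PosSysAux in
/-- `L∞`-induced performance of a positive system: for Metzler `A` and nonnegative
`B, C, D`, the matrix `A` is Hurwitz with static gain `(D - C A⁻¹ B) 𝟏 < γ 𝟏`
(equivalently, `L∞`-induced gain less than `γ`) iff there is `ξ ≥ 0` with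
`Aξ + B𝟏 < 0` and `Cξ + D𝟏 < γ𝟏` entrywise. -/
theorem positive_system_linf_gain_iff {n m r : ℕ}
    (A : Matrix (Fin n) (Fin n) ℝ) (B : Matrix (Fin n) (Fin m) ℝ)
    (C : Matrix (Fin r) (Fin n) ℝ) (D : Matrix (Fin r) (Fin m) ℝ)
    (hA : A.Metzler) (hB : ∀ i j, 0 ≤ B i j) (hC : ∀ i j, 0 ≤ C i j)
    (hD : ∀ i j, 0 ≤ D i j) (γ : ℝ) (hγ : 0 < γ) :
    (A.Hurwitz ∧ ∀ i, ((D - C * A⁻¹ * B) *ᵥ fun _ => (1 : ℝ)) i < γ) ↔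
    (∃ ξ : Fin n → ℝ, (∀ i, 0 ≤ ξ i) ∧
      (∀ i, (A *ᵥ ξ + B *ᵥ fun _ => (1 : ℝ)) i < 0) ∧
      (∀ i, (C *ᵥ ξ + D *ᵥ fun _ => (1 : ℝ)) i < γ)) := by
  classical
  set w : Fin m → ℝ := fun _ => (1 : ℝ) with hw
  constructor
  · rintro ⟨hH, hgain⟩
    have hU : IsUnit A.det := by
      have h' := shifted_isUnit hH (le_refl (0:ℝ))
      rwa [zero_smul, sub_zero, Matrix.isUnit_iff_isUnit_det] at h'
    set M : Matrix (Fin n) (Fin n) ℝ := -(A⁻¹) with hM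
    have hMnn : NN M := inv_entries_nonpos hA hH
    have hCMnn : NN (C * M) := NN.mul (fun i j => hC i j) hMnn
    have hrepr : D - C * A⁻¹ * B = D + C * M * B := by
      rw [hM, Matrix.mul_neg, Matrix.neg_mul, sub_eq_add_neg]
    set g : Fin r → ℝ := fun i => ((D - C * A⁻¹ * B) *ᵥ w) i with hg
    set c : Fin r → ℝ := fun i => ((C * M) *ᵥ (fun _ => (1:ℝ))) i with hc
    have hcnn : ∀ i, 0 ≤ c i := fun i => mulVec_nonneg hCMnn (fun _ => zero_le_one) i
    obtain ⟨ε, hε0, hεle⟩ : ∃ ε > 0, ∀ i, ε ≤ (γ - g i) / (1 + c i) := by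
      rcases isEmpty_or_nonempty (Fin r) with hr | hr
      · exact ⟨1, one_pos, fun i => (hr.false i).elim⟩
      · obtain ⟨k, -, hk⟩ := Finset.exists_min_image Finset.univ
          (fun i => (γ - g i) / (1 + c i)) ⟨Classical.arbitrary _, Finset.mem_univ _⟩
        refine ⟨_, div_pos ?_ (by have := hcnn k; linarith), fun i => hk i (Finset.mem_univ i)⟩
        have := hgain k
        simp only [hg]
        linarith
    set u : Fin n → ℝ := fun i => (B *ᵥ w) i + ε with hu
    have hunn : ∀ i, 0 ≤ u i := by
      intro i
      have := mulVec_nonneg (fun i j => hB i j) (fun _ => zero_le_one) (M := B) i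
      simp only [hu]
      linarith
    refine ⟨M *ᵥ u, fun i => mulVec_nonneg hMnn hunn i, ?_, ?_⟩
    · intro i
      have hAM : A * M = -1 := by
        rw [hM, Matrix.mul_neg, Matrix.mul_nonsing_inv _ hU]
      have hα : A *ᵥ (M *ᵥ u) = -u := by
        rw [Matrix.mulVec_mulVec, hAM, Matrix.neg_mulVec, Matrix.one_mulVec]
      rw [hα]
      simp only [Pi.add_apply, Pi.neg_apply, hu]
      linarith
    · intro i
      have hsplit : u = (fun i => (B *ᵥ w) i) + fun _ => ε := rfl
      have h1 : C *ᵥ (M *ᵥ u) = (C * M) *ᵥ u := Matrix.mulVec_mulVec u C M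
      have h2 : (C * M) *ᵥ u = (C * M * B) *ᵥ w + (C * M) *ᵥ (fun _ => ε) := by
        rw [hsplit, Matrix.mulVec_add, Matrix.mulVec_mulVec]
      have h3 : ((C * M) *ᵥ (fun _ => ε)) i = ε * c i := by
        have hεw : (fun _ : Fin n => ε) = ε • (fun _ : Fin n => (1:ℝ)) := by
          funext j; simp
        rw [hεw, Matrix.mulVec_smul, Pi.smul_apply, smul_eq_mul]
      have h4 : g i = ((D *ᵥ w) i) + ((C * M * B) *ᵥ w) i := by
        simp only [hg, hrepr, Matrix.add_mulVec, Pi.add_apply]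
      have hεi := hεle i
      rw [le_div_iff₀ (by have := hcnn i; linarith)] at hεi
      have hgi : g i < γ := hgain i
      simp only [Pi.add_apply, h1, h2, h3]
      have hfin : ((C * M * B) *ᵥ w) i + ε * c i + (D *ᵥ w) i < γ := by nlinarith [hcnn i]
      linarith
  · rintro ⟨ξ, hξ0, hξ1, hξ2⟩
    have hBw : ∀ i, 0 ≤ (B *ᵥ w) i := fun i =>
      mulVec_nonneg (fun i j => hB i j) (fun _ => zero_le_one) i
    have hAξ : ∀ i, (A *ᵥ ξ) i < 0 := by
      intro i
      have h' := hξ1 i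
      simp only [Pi.add_apply] at h'
      linarith [hBw i]
    have hH : A.Hurwitz := hurwitz_of_exists hA hξ0 hAξ
    refine ⟨hH, ?_⟩
    have hU : IsUnit A.det := by
      have h' := shifted_isUnit hH (le_refl (0:ℝ))
      rwa [zero_smul, sub_zero, Matrix.isUnit_iff_isUnit_det] at h'
    set M : Matrix (Fin n) (Fin n) ℝ := -(A⁻¹) with hM
    have hMnn : NN M := inv_entries_nonpos hA hH
    have hCMnn : NN (C * M) := NN.mul (fun i j => hC i j) hMnn
    have hrepr : D - C * A⁻¹ * B = D + C * M * B := by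
      rw [hM, Matrix.mul_neg, Matrix.neg_mul, sub_eq_add_neg]
    intro i
    set u' : Fin n → ℝ := -(A *ᵥ ξ + B *ᵥ w) with hu'
    have hu'nn : ∀ j, 0 ≤ u' j := by
      intro j
      have h' := hξ1 j
      simp only [Pi.add_apply] at h'
      simp only [hu', Pi.neg_apply, Pi.add_apply]
      linarith
    have hBweq : B *ᵥ w = -(A *ᵥ ξ) - u' := by
      simp only [hu']
      funext j
      simp only [Pi.sub_apply, Pi.neg_apply, Pi.add_apply]
      ring
    have hMA : M *ᵥ (A *ᵥ ξ) = -ξ := by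
      rw [hM, Matrix.mulVec_mulVec, Matrix.neg_mul, Matrix.nonsing_inv_mul _ hU,
        Matrix.neg_mulVec, Matrix.one_mulVec]
    have hkey : (C * M * B) *ᵥ w = C *ᵥ ξ - (C * M) *ᵥ u' := by
      have e1 : (C * M * B) *ᵥ w = (C * M) *ᵥ (B *ᵥ w) := (Matrix.mulVec_mulVec w (C * M) B).symm
      rw [e1, hBweq, Matrix.mulVec_sub, Matrix.mulVec_neg]
      congr 1
      rw [← Matrix.mulVec_mulVec, hMA, Matrix.mulVec_neg, neg_neg]
    have hnn : 0 ≤ ((C * M) *ᵥ u') i := mulVec_nonneg hCMnn hu'nn i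
    have hval : ((D - C * A⁻¹ * B) *ᵥ w) i
        = (D *ᵥ w) i + (C *ᵥ ξ) i - ((C * M) *ᵥ u') i := by
      rw [hrepr, Matrix.add_mulVec, Pi.add_apply, hkey, Pi.sub_apply]
      ring
    have h2 := hξ2 i
    simp only [Pi.add_apply] at h2
    rw [hval]
    linarith
end

section
/- Let A ∈ ℝ^{n×n} be Metzler, B ∈ ℝ^{n×m} have nonnegative entries, and suppose ξ ∈ ℝ^n satisfies ξ ≥ 0 and Aξ + B·𝟏 < 0 entrywise. Let w : [0,∞) → ℝ^m be continuous with |w_k(t)| ≤ 1 for all k and all t ≥ 0, and let x : [0,∞) → ℝ^n be differentiable with x(0) = 0 and x′(t) = A x(t) + B w(t) for all t ≥ 0. Then −ξ < x(t) < ξ entrywise for all t ≥ 0. -/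
open Matrix Filter Set

lemma left_deriv_nonneg' {f : ℝ → ℝ} {T d : ℝ} (hT : 0 < T) (hf : HasDerivAt f d T)
    (hle : ∀ s, 0 ≤ s → s < T → f s ≤ f T) : 0 ≤ d := by
  rw [hasDerivAt_iff_tendsto_slope] at hf
  have h1 : Tendsto (slope f T) (nhdsWithin T (Iio T)) (nhds d) :=
    hf.mono_left (nhdsWithin_mono _ (fun s hs => ne_of_lt hs))
  refine ge_of_tendsto h1 ?_
  filter_upwards [Ioo_mem_nhdsLT_of_mem (show T ∈ Set.Ioc 0 T from ⟨hT, le_refl T⟩)] with s hs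
  have h2 : f s - f T ≤ 0 := sub_nonpos.mpr (hle s hs.1.le hs.2)
  have h3 : s - T < 0 := sub_neg.mpr hs.2
  rw [slope_def_field]
  have := div_nonneg (neg_nonneg.mpr h2) (neg_nonneg.mpr h3.le)
  rwa [neg_div_neg_eq] at this

/-- If `A` is Metzler, `B ≥ 0`, `ξ ≥ 0` and `Aξ + B𝟏 < 0` entrywise, then every solution
of `ẋ = Ax + Bw` with `x(0) = 0` and `‖w‖∞ ≤ 1` satisfies `-ξ < x(t) < ξ` entrywise for
all `t ≥ 0`. -/
theorem positive_system_state_bound {n m : ℕ}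
    (A : Matrix (Fin n) (Fin n) ℝ) (B : Matrix (Fin n) (Fin m) ℝ)
    (hA : A.Metzler) (hB : ∀ i j, 0 ≤ B i j)
    (ξ : Fin n → ℝ) (hξ : ∀ i, 0 ≤ ξ i)
    (hAξ : ∀ i, (A *ᵥ ξ + B *ᵥ fun _ => (1 : ℝ)) i < 0)
    (w : ℝ → Fin m → ℝ) (hw_cont : Continuous w)
    (hw : ∀ t : ℝ, 0 ≤ t → ∀ k, |w t k| ≤ 1)
    (x : ℝ → Fin n → ℝ) (hx0 : x 0 = 0)
    (hx : ∀ t : ℝ, 0 ≤ t → HasDerivAt x (A *ᵥ x t + B *ᵥ w t) t) :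
    ∀ t : ℝ, 0 ≤ t → ∀ i, -ξ i < x t i ∧ x t i < ξ i := by
    -- positivity of ξ
  have hξpos : ∀ i, 0 < ξ i := by
    intro i
    rcases lt_or_eq_of_le (hξ i) with h | h
    · exact h
    · exfalso
      have h1 : 0 ≤ (A *ᵥ ξ) i := by
        simp only [Matrix.mulVec, dotProduct]
        apply Finset.sum_nonneg
        intro j _
        rcases eq_or_ne j i with rfl | hji
        · rw [← h]; ring_nf; exact le_refl 0
        · exact mul_nonneg (hA i j (Ne.symm hji)) (hξ j)
      have h2 : 0 ≤ (B *ᵥ fun _ => (1 : ℝ)) i := by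
        simp only [Matrix.mulVec, dotProduct]
        exact Finset.sum_nonneg fun k _ => by simpa using hB i k
      have := hAξ i
      simp only [Pi.add_apply] at this
      linarith
  by_contra hcon
  push_neg at hcon
  obtain ⟨t₀, ht₀, i₀, hi₀⟩ := hcon
  have hbad : ∃ j, ξ j ≤ |x t₀ j| := by
    refine ⟨i₀, ?_⟩
    rcases le_or_gt (x t₀ i₀) (-ξ i₀) with h | h
    · exact le_abs.mpr (Or.inr (by linarith))
    · exact le_abs.mpr (Or.inl (hi₀ h))
  -- the bad set and its infimum
  set S : Set ℝ := {t : ℝ | 0 ≤ t ∧ ∃ j, ξ j ≤ |x t j|} with hS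
  have hSne : S.Nonempty := ⟨t₀, ht₀, hbad⟩
  have hSbd : BddBelow S := ⟨0, fun t ht => ht.1⟩
  set T : ℝ := sInf S with hT
  have hT0 : 0 ≤ T := le_csInf hSne fun t ht => ht.1
  have hxcont : ∀ j, ContinuousAt (fun t => |x t j|) T := fun j =>
    continuous_abs.continuousAt.comp
      (((continuous_apply j).continuousAt).comp (hx T hT0).continuousAt)
  -- T belongs to S (via closure)
  have hTcl : T ∈ closure S := csInf_mem_closure hSne hSbd
  have hl : (nhdsWithin T S).NeBot := mem_closure_iff_nhdsWithin_neBot.mp hTcl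
  have hTmem : ∃ j, ξ j ≤ |x T j| := by
    have hev : ∀ᶠ t in nhdsWithin T S, ∃ j, ξ j ≤ |x t j| := by
      filter_upwards [self_mem_nhdsWithin] with t ht
      exact ht.2
    have hfr : ∃ j, ∃ᶠ t in nhdsWithin T S, ξ j ≤ |x t j| := by
      by_contra hno
      push_neg at hno
      have h2 : ∀ᶠ t in nhdsWithin T S, ∀ j, ¬ ξ j ≤ |x t j| :=
        eventually_all.mpr fun j => (hno j).mono fun t ht => not_le.mpr ht
      obtain ⟨t, h3, h4⟩ := (h2.and hev).exists
      obtain ⟨j, hj⟩ := h4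
      exact h3 j hj
    obtain ⟨j, hfrj⟩ := hfr
    refine ⟨j, ?_⟩
    by_contra hlt'
    push_neg at hlt'
    have htend : Tendsto (fun t => |x t j|) (nhdsWithin T S) (nhds (|x T j|)) :=
      ((hxcont j).tendsto).mono_left nhdsWithin_le_nhds
    have hev2 : ∀ᶠ t in nhdsWithin T S, |x t j| < ξ j :=
      htend.eventually_lt_const hlt'
    obtain ⟨t, h5, h6⟩ := (hfrj.and_eventually hev2).exists
    exact absurd h5 (not_le.mpr h6)
  -- T is positive
  have hTpos : 0 < T := by
    rcases lt_or_eq_of_le hT0 with h | h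
    · exact h
    · exfalso
      obtain ⟨j, hj⟩ := hTmem
      rw [← h, hx0] at hj
      simp at hj
      exact absurd hj (not_le.mpr (hξpos j))
  -- before T, strictly inside
  have hlt : ∀ s, 0 ≤ s → s < T → ∀ j, |x s j| < ξ j := by
    intro s hs hsT j
    by_contra hge
    push_neg at hge
    have : s ∈ S := ⟨hs, j, hge⟩
    exact absurd (csInf_le hSbd this) (not_le.mpr hsT)
  -- at T, weakly inside
  have hTle : ∀ j, |x T j| ≤ ξ j := by
    intro j
    have htend : Tendsto (fun t => |x t j|) (nhdsWithin T (Iio T)) (nhds (|x T j|)) :=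
      ((hxcont j).tendsto).mono_left nhdsWithin_le_nhds
    refine le_of_tendsto htend ?_
    filter_upwards [Ioo_mem_nhdsLT_of_mem (show T ∈ Set.Ioc 0 T from ⟨hTpos, le_refl T⟩)]
      with s hs
    exact (hlt s hs.1.le hs.2 j).le
  obtain ⟨i, hi⟩ := hTmem
  have hiabs : |x T i| = ξ i := le_antisymm (hTle i) hi
  have hd := (hasDerivAt_pi.mp (hx T hT0)) i
  have hBk : ∀ k, |w T k| ≤ 1 := hw T hT0
  rcases abs_eq (hξ i) |>.mp hiabs with hxi | hxi
  · -- x T i = ξ i, derivative is negative, contradiction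
    have hAx : (A *ᵥ x T) i ≤ (A *ᵥ ξ) i := by
      simp only [Matrix.mulVec, dotProduct]
      apply Finset.sum_le_sum
      intro j _
      rcases eq_or_ne j i with rfl | hji
      · rw [hxi]
      · exact mul_le_mul_of_nonneg_left ((abs_le.mp (hTle j)).2) (hA i j (Ne.symm hji))
    have hBw : (B *ᵥ w T) i ≤ (B *ᵥ fun _ => (1 : ℝ)) i := by
      simp only [Matrix.mulVec, dotProduct]
      apply Finset.sum_le_sum
      intro k _
      exact mul_le_mul_of_nonneg_left ((abs_le.mp (hBk k)).2) (hB i k)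
    have hdneg : (A *ᵥ x T + B *ᵥ w T) i < 0 := by
      have := hAξ i
      simp only [Pi.add_apply] at this ⊢
      linarith
    have hle : ∀ s, 0 ≤ s → s < T → x s i ≤ x T i := by
      intro s hs hsT
      have := hlt s hs hsT i
      rw [hxi]
      exact le_of_lt (lt_of_le_of_lt (le_abs_self _) this)
    exact absurd (left_deriv_nonneg' hTpos hd hle) (not_le.mpr hdneg)
  · -- x T i = -ξ i, derivative is positive, contradiction
    have hAx : -((A *ᵥ ξ) i) ≤ (A *ᵥ x T) i := by
      simp only [Matrix.mulVec, dotProduct, ← Finset.sum_neg_distrib]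
      apply Finset.sum_le_sum
      intro j _
      rcases eq_or_ne j i with rfl | hji
      · rw [hxi]; ring_nf; exact le_refl _
      · have h1 := (abs_le.mp (hTle j)).1
        have := mul_le_mul_of_nonneg_left h1 (hA i j (Ne.symm hji))
        linarith [this]
    have hBw : -((B *ᵥ fun _ => (1 : ℝ)) i) ≤ (B *ᵥ w T) i := by
      simp only [Matrix.mulVec, dotProduct, ← Finset.sum_neg_distrib]
      apply Finset.sum_le_sum
      intro k _
      have h1 := (abs_le.mp (hBk k)).1
      have := mul_le_mul_of_nonneg_left h1 (hB i k)
      linarith [this]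
    have hdpos : 0 < (A *ᵥ x T + B *ᵥ w T) i := by
      have := hAξ i
      simp only [Pi.add_apply] at this ⊢
      linarith
    have hle : ∀ s, 0 ≤ s → s < T → -(x s i) ≤ -(x T i) := by
      intro s hs hsT
      have := hlt s hs hsT i
      rw [hxi]
      have := (abs_lt.mp this).1
      linarith
    have := left_deriv_nonneg' hTpos hd.neg hle
    simp only [neg_nonneg] at this
    exact absurd this (not_le.mpr hdpos)
end

section
/- Let A ∈ ℝ^{n×n} be Metzler and let B ∈ ℝ^{n×m}, C ∈ ℝ^{r×n}, D ∈ ℝ^{r×m} have nonnegative entries, and let γ > 0. Then the following are equivalent: (1) A is Hurwitz and (D − C A⁻¹ B)ᵀ·𝟏 < γ·𝟏 entrywise (this expresses that the L₁-induced input-output gain of ẋ = Ax + Bw, y = Cx + Dw is less than γ, since for such positive systems the induced gain equals the static gain D − CA⁻¹B); (2) there exists p ∈ ℝ^n with p ≥ 0 such that Aᵀp + Cᵀ·𝟏 < 0 and Bᵀp + Dᵀ·𝟏 < γ·𝟏 entrywise. -/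
open Matrix

lemma exists_eigenvector_of_mem_spectrum {n : ℕ} (M : Matrix (Fin n) (Fin n) ℂ) (μ : ℂ)
    (h : μ ∈ spectrum ℂ M) : ∃ x, x ≠ 0 ∧ M *ᵥ x = μ • x := by
  rw [spectrum.mem_iff, Matrix.isUnit_iff_isUnit_det, isUnit_iff_ne_zero, not_not] at h
  obtain ⟨v, hv, hve⟩ := (Matrix.exists_mulVec_eq_zero_iff).2 h
  refine ⟨v, hv, ?_⟩
  rw [sub_mulVec, Algebra.algebraMap_eq_smul_one, smul_mulVec, one_mulVec,
    sub_eq_zero] at hve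
  exact hve.symm

/-- A Metzler matrix `M` with a positive vector `p` such that `M p < 0` entrywise
has all complex eigenvalues with negative real part. -/
lemma metzler_hurwitz_of_mulVec_neg {n : ℕ} (M : Matrix (Fin n) (Fin n) ℝ)
    (hM : ∀ i j, i ≠ j → 0 ≤ M i j) (p : Fin n → ℝ) (hp : ∀ i, 0 < p i)
    (hMp : ∀ i, (M *ᵥ p) i < 0) :
    ∀ μ ∈ spectrum ℂ (M.map (Complex.ofReal)), μ.re < 0 := by
  intro μ hμ
  obtain ⟨x, hx, hxe⟩ := exists_eigenvector_of_mem_spectrum _ _ hμ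
  -- choose i maximizing ‖x i‖ / p i
  obtain ⟨j₀, hj₀⟩ := Function.ne_iff.1 hx
  obtain ⟨i, -, hi⟩ := Finset.exists_max_image Finset.univ (fun j => ‖x j‖ / p j)
    ⟨j₀, Finset.mem_univ j₀⟩
  set c : ℝ := ‖x i‖ / p i with hc
  have hcpos : 0 < c := lt_of_lt_of_le (div_pos (norm_pos_iff.2 hj₀) (hp j₀))
    (hi j₀ (Finset.mem_univ j₀))
  have hxj : ∀ j, ‖x j‖ ≤ c * p j := by
    intro j
    calc ‖x j‖ = ‖x j‖ / p j * p j := by field_simp [(hp j).ne']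
      _ ≤ c * p j := mul_le_mul_of_nonneg_right (hi j (Finset.mem_univ j)) (hp j).le
  have hxi : ‖x i‖ = c * p i := by
    rw [hc, div_mul_cancel₀ _ (hp i).ne']
  -- row i of the eigen equation
  have hrow : (μ - (M i i : ℂ)) * x i = ∑ j ∈ Finset.univ.erase i, (M i j : ℂ) * x j := by
    have := congrFun hxe i
    rw [Matrix.mulVec, dotProduct] at this
    simp only [Matrix.map_apply, Pi.smul_apply, smul_eq_mul] at this
    rw [← Finset.add_sum_erase _ _ (Finset.mem_univ i)] at this
    rw [sub_mul]
    rw [← this]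
    ring
  have hbound : ‖μ - (M i i : ℂ)‖ * (c * p i) < -(M i i) * (c * p i) := by
    calc ‖μ - (M i i : ℂ)‖ * (c * p i) = ‖(μ - (M i i : ℂ)) * x i‖ := by
          rw [norm_mul, hxi]
      _ = ‖∑ j ∈ Finset.univ.erase i, (M i j : ℂ) * x j‖ := by rw [hrow]
      _ ≤ ∑ j ∈ Finset.univ.erase i, ‖(M i j : ℂ) * x j‖ := norm_sum_le _ _
      _ ≤ ∑ j ∈ Finset.univ.erase i, M i j * (c * p j) := by
          refine Finset.sum_le_sum fun j hj => ?_
          rw [norm_mul, Complex.norm_real, Real.norm_eq_abs,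
            abs_of_nonneg (hM i j (Finset.ne_of_mem_erase hj).symm)]
          exact mul_le_mul_of_nonneg_left (hxj j) (hM i j (Finset.ne_of_mem_erase hj).symm)
      _ = c * ∑ j ∈ Finset.univ.erase i, M i j * p j := by
          rw [Finset.mul_sum]; apply Finset.sum_congr rfl; intros; ring
      _ = c * ((M *ᵥ p) i - M i i * p i) := by
          rw [Matrix.mulVec, dotProduct, ← Finset.add_sum_erase _ _ (Finset.mem_univ i)]
          ring
      _ < c * (0 - M i i * p i) := by
          apply mul_lt_mul_of_pos_left _ hcpos
          exact sub_lt_sub_right (hMp i) _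
      _ = -(M i i) * (c * p i) := by ring
  have hlt : ‖μ - (M i i : ℂ)‖ < -(M i i) :=
    lt_of_mul_lt_mul_right (by linarith [hbound]) (le_of_lt (mul_pos hcpos (hp i)))
  have : μ.re - M i i ≤ ‖μ - (M i i : ℂ)‖ := by
    calc μ.re - M i i = (μ - (M i i : ℂ)).re := by simp
      _ ≤ |(μ - (M i i : ℂ)).re| := le_abs_self _
      _ ≤ ‖μ - (M i i : ℂ)‖ := Complex.abs_re_le_norm _
  linarith

attribute [local instance] Matrix.linftyOpNormedRing Matrix.linftyOpNormedAlgebra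

lemma linfty_entry_norm_le {n : ℕ} (X : Matrix (Fin n) (Fin n) ℂ) (i j : Fin n) :
    ‖X i j‖ ≤ ‖X‖ := by
  have h : ‖X i j‖₊ ≤ ‖X‖₊ := by
    rw [Matrix.linfty_opNNNorm_def]
    exact le_trans
      (Finset.single_le_sum (f := fun j => ‖X i j‖₊) (fun _ _ => zero_le) (Finset.mem_univ j))
      (Finset.le_sup (f := fun i => ∑ j, ‖X i j‖₊) (Finset.mem_univ i))
  exact_mod_cast h

/-- A Metzler Hurwitz matrix is invertible with entrywise nonpositive inverse. -/
lemma metzler_hurwitz_inv_nonpos {n : ℕ} (M : Matrix (Fin n) (Fin n) ℝ)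
    (hM : ∀ i j, i ≠ j → 0 ≤ M i j)
    (hH : ∀ μ ∈ spectrum ℂ (M.map Complex.ofReal), μ.re < 0) :
    IsUnit M.det ∧ ∀ i j, M⁻¹ i j ≤ 0 := by
  rcases n with _ | n
  · exact ⟨by simp [Matrix.det_fin_zero], fun i => i.elim0⟩
  set A : Matrix (Fin (n+1)) (Fin (n+1)) ℂ := M.map Complex.ofReal with hA
  obtain ⟨K, hK0, hKnorm⟩ : ∃ K : ℝ, 0 ≤ K ∧ ‖A‖ ≤ K := ⟨‖A‖, norm_nonneg _, le_refl _⟩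
  -- maximum real part of the spectrum
  obtain ⟨μ₀, hμ₀mem, hμ₀'⟩ := (spectrum.isCompact A).exists_isMaxOn (spectrum.nonempty A)
    Complex.continuous_re.continuousOn
  obtain ⟨δ, hδ0, hδre⟩ : ∃ δ : ℝ, 0 < δ ∧ ∀ μ ∈ spectrum ℂ A, μ.re ≤ -δ := by
    refine ⟨-μ₀.re, by have := hH μ₀ hμ₀mem; linarith, fun μ hμ => by
      have := hμ₀' hμ; simpa using this⟩
  have hdiag : ∀ i, |M i i| ≤ K := by
    intro i
    have h := (linfty_entry_norm_le A i i).trans hKnorm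
    rwa [hA, Matrix.map_apply, Complex.norm_real, Real.norm_eq_abs] at h
  obtain ⟨s, hs0, hsK, hsbig⟩ : ∃ s : ℝ, 0 < s ∧ K ≤ s ∧ K^2 < 2*s*δ := by
    refine ⟨K^2/(2*δ) + K + 1, by positivity, ?_, ?_⟩
    · have : 0 ≤ K^2/(2*δ) := by positivity
      linarith
    · have h1 : 2*(K^2/(2*δ) + K + 1)*δ = K^2 + (K+1)*(2*δ) := by field_simp; ring
      have h2 : 0 < (K+1)*(2*δ) := by positivity
      linarith
  set N : Matrix (Fin (n+1)) (Fin (n+1)) ℝ := M + s • (1 : Matrix _ _ ℝ) with hN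
  have hNnn : ∀ i j, 0 ≤ N i j := by
    intro i j
    rcases eq_or_ne i j with rfl | hij
    · have h1 : -K ≤ M i i := (abs_le.1 (hdiag i)).1
      simp only [hN, Matrix.add_apply, Matrix.smul_apply, Matrix.one_apply_eq, smul_eq_mul,
        mul_one]
      linarith
    · simpa [hN, Matrix.one_apply_ne hij] using hM i j hij
  set a : Matrix (Fin (n+1)) (Fin (n+1)) ℝ := s⁻¹ • N with ha
  have hann : ∀ i j, 0 ≤ a i j := fun i j => by
    simpa [ha] using mul_nonneg (inv_nonneg.2 hs0.le) (hNnn i j)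
  have hapow : ∀ k i j, 0 ≤ (a ^ k) i j := by
    intro k
    induction k with
    | zero =>
        intro i j
        rw [pow_zero, Matrix.one_apply]
        split <;> norm_num
    | succ k ih =>
        intro i j
        rw [pow_succ, Matrix.mul_apply]
        exact Finset.sum_nonneg fun l _ => mul_nonneg (ih i l) (hann l j)
  -- complex version
  set aC : Matrix (Fin (n+1)) (Fin (n+1)) ℂ := a.map Complex.ofReal with haC
  have hmapow : ∀ k : ℕ, (a ^ k).map Complex.ofReal = aC ^ k := by
    intro k
    have := map_pow (Complex.ofRealHom.mapMatrix) a k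
    simp [RingHom.mapMatrix_apply] at this
    exact this
  -- spectral radius of aC is < 1
  have hspec : ∀ z ∈ spectrum ℂ aC, ‖z‖₊ < 1 := by
    intro z hz
    have hNCmap : N.map Complex.ofReal
        = algebraMap ℂ (Matrix (Fin (n+1)) (Fin (n+1)) ℂ) (s : ℂ) + A := by
      ext i j
      rcases eq_or_ne i j with rfl | hij
      · simp [hN, Matrix.algebraMap_matrix_apply, add_comm, hA, Matrix.map_apply]
      · simp [hN, Matrix.algebraMap_matrix_apply, hij, Matrix.one_apply_ne hij, hA,
          Matrix.map_apply]
    have hsne : ((s : ℂ)⁻¹ : ℂ) ≠ 0 := by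
      simp only [ne_eq, inv_eq_zero, Complex.ofReal_eq_zero]
      exact hs0.ne'
    have hNC : aC = (Units.mk0 _ hsne : ℂˣ) •
        (algebraMap ℂ (Matrix (Fin (n+1)) (Fin (n+1)) ℂ) (s : ℂ) + A) := by
      rw [← hNCmap, haC, ha, Units.smul_def, Units.val_mk0]
      ext i j
      simp [Matrix.map_apply]
    rw [hNC, spectrum.unit_smul_eq_smul] at hz
    obtain ⟨w, hw, rfl⟩ := hz
    rw [← spectrum.singleton_add_eq] at hw
    obtain ⟨u, hu, μ, hμ, rfl⟩ := Set.mem_add.1 hw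
    rw [Set.mem_singleton_iff] at hu
    subst hu
    have hre : μ.re ≤ -δ := hδre μ hμ
    have hnμ : ‖μ‖ ≤ K := (spectrum.norm_le_norm_of_mem hμ).trans hKnorm
    have habs : ‖μ‖ ≤ K := hnμ
    have h2 : μ.re^2 + μ.im^2 ≤ K^2 := by
      have h := Complex.normSq_eq_norm_sq μ
      rw [Complex.normSq_apply] at h
      nlinarith [norm_nonneg μ]
    have hsq : ‖(s : ℂ) + μ‖^2 < s^2 := by
      rw [Complex.sq_norm, Complex.normSq_apply]
      simp only [Complex.add_re, Complex.add_im, Complex.ofReal_re, Complex.ofReal_im]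
      nlinarith [hre, h2, hsbig, hs0]
    have hlt : ‖(s : ℂ) + μ‖ < s := lt_of_pow_lt_pow_left₀ 2 hs0.le hsq
    have hnormz : ‖((Units.mk0 _ hsne : ℂˣ) • ((s:ℂ) + μ) : ℂ)‖ = s⁻¹ * ‖(s:ℂ) + μ‖ := by
      rw [Units.smul_def, Units.val_mk0, smul_eq_mul, norm_mul, norm_inv,
        Complex.norm_real, Real.norm_eq_abs, abs_of_pos hs0]
    have : ‖((Units.mk0 _ hsne : ℂˣ) • ((s:ℂ) + μ) : ℂ)‖ < 1 := by
      rw [hnormz, inv_mul_lt_iff₀ hs0, mul_one]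
      exact hlt
    exact_mod_cast this
  have hρ : spectralRadius ℂ aC < 1 := by
    have := spectrum.spectralRadius_lt_of_forall_lt (a := aC) (r := 1) hspec
    simpa using this
  -- geometric decay of the powers of aC
  obtain ⟨r, hρr, hr1⟩ := exists_between hρ
  have hrne : r ≠ ⊤ := (hr1.trans ENNReal.one_lt_top).ne
  have hrr1 : r.toReal < 1 := by
    rw [show (1:ℝ) = (1:ENNReal).toReal by simp]
    exact (ENNReal.toReal_lt_toReal hrne ENNReal.one_ne_top).2 hr1
  have hrr0 : 0 ≤ r.toReal := ENNReal.toReal_nonneg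
  have hev : ∀ᶠ k : ℕ in Filter.atTop, (‖aC ^ k‖₊ : ENNReal) ^ (1 / (k:ℝ)) < r :=
    (spectrum.pow_nnnorm_pow_one_div_tendsto_nhds_spectralRadius aC).eventually_lt_const hρr
  obtain ⟨k₀, hk₀⟩ := Filter.eventually_atTop.1 (hev.and (Filter.eventually_ge_atTop 1))
  have hnormbound : ∀ k ≥ k₀, ‖aC ^ k‖ ≤ r.toReal ^ k := by
    intro k hk
    obtain ⟨h1, h2⟩ := hk₀ k hk
    have hkne : (k : ℝ) ≠ 0 := by positivity
    have hx : (‖aC ^ k‖₊ : ENNReal) ≤ r ^ (k : ℕ) := by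
      have h3 : ((‖aC ^ k‖₊ : ENNReal) ^ (1 / (k:ℝ))) ^ (k : ℝ) ≤ r ^ (k : ℝ) :=
        ENNReal.rpow_le_rpow h1.le (Nat.cast_nonneg k)
      rw [← ENNReal.rpow_mul, one_div, inv_mul_cancel₀ hkne, ENNReal.rpow_one,
        ENNReal.rpow_natCast] at h3
      exact h3
    have h4 := ENNReal.toReal_mono (by simp [ENNReal.pow_ne_top hrne]) hx
    rwa [ENNReal.toReal_pow, ENNReal.coe_toReal, coe_nnnorm] at h4
  have hentry : ∀ i j, ∀ k ≥ k₀, ‖(a ^ k) i j‖ ≤ r.toReal ^ k := by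
    intro i j k hk
    have h1 : ((a ^ k) i j : ℂ) = (aC ^ k) i j := by
      rw [← hmapow k, Matrix.map_apply]
    have h2 : ‖(a ^ k) i j‖ = ‖((a ^ k) i j : ℂ)‖ := by
      rw [Complex.norm_real]
    rw [h2, h1]
    exact (linfty_entry_norm_le _ i j).trans (hnormbound k hk)
  have hsum : ∀ i j, Summable fun k => (a ^ k) i j := by
    intro i j
    apply Summable.of_norm_bounded_eventually_nat
      (summable_geometric_of_lt_one hrr0 hrr1)
    exact Filter.eventually_atTop.2 ⟨k₀, hentry i j⟩
  set T : Matrix (Fin (n+1)) (Fin (n+1)) ℝ := Matrix.of (fun i j => ∑' k, (a ^ k) i j)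
    with hT
  have hTnn : ∀ i j, 0 ≤ T i j := fun i j => tsum_nonneg fun k => hapow k i j
  have key : a * T = T - 1 := by
    ext i j
    rw [Matrix.mul_apply, Matrix.sub_apply]
    have h1 : ∀ l, a i l * T l j = ∑' k, a i l * (a ^ k) l j := fun l =>
      (tsum_mul_left).symm
    calc ∑ l, a i l * T l j = ∑ l, ∑' k, a i l * (a ^ k) l j := by
          exact Finset.sum_congr rfl fun l _ => h1 l
      _ = ∑' k, ∑ l, a i l * (a ^ k) l j :=
          (Summable.tsum_finsetSum fun l _ => (hsum l j).mul_left _).symm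
      _ = ∑' k, (a ^ (k+1)) i j := by
          congr 1; funext k
          rw [pow_succ', Matrix.mul_apply]
      _ = T i j - (1 : Matrix (Fin (n+1)) (Fin (n+1)) ℝ) i j := by
          have h2 := Summable.tsum_eq_zero_add (hsum i j)
          have h3 : (a ^ 0) i j = (1 : Matrix (Fin (n+1)) (Fin (n+1)) ℝ) i j := by
            rw [pow_zero]
          rw [hT]
          simp only [Matrix.of_apply]
          rw [h2, h3]
          ring
  have key2 : M * ((-(s⁻¹)) • T) = 1 := by
    have hM_eq : M = s • (a - 1) := by
      rw [ha, smul_sub, smul_smul, mul_inv_cancel₀ hs0.ne', one_smul, hN]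
      abel
    rw [hM_eq, Matrix.smul_mul, Matrix.mul_smul, smul_smul, Matrix.sub_mul, key,
      Matrix.one_mul]
    have h5 : T - 1 - T = -(1 : Matrix (Fin (n+1)) (Fin (n+1)) ℝ) := by abel
    rw [h5, show s * -s⁻¹ = -1 by field_simp]
    simp
  refine ⟨Matrix.isUnit_det_of_right_inverse key2, ?_⟩
  intro i j
  rw [Matrix.inv_eq_right_inv key2]
  simp only [Matrix.smul_apply, smul_eq_mul]
  have h6 := hTnn i j
  have h7 : (0:ℝ) < s⁻¹ := inv_pos.2 hs0
  nlinarith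

lemma spectrum_transpose_eq {n : ℕ} (M : Matrix (Fin n) (Fin n) ℝ) :
    spectrum ℂ (Mᵀ.map Complex.ofReal) = spectrum ℂ (M.map Complex.ofReal) := by
  ext μ
  simp only [spectrum.mem_iff, Matrix.isUnit_iff_isUnit_det]
  have h : (algebraMap ℂ (Matrix (Fin n) (Fin n) ℂ) μ - Mᵀ.map Complex.ofReal)
      = (algebraMap ℂ (Matrix (Fin n) (Fin n) ℂ) μ - M.map Complex.ofReal)ᵀ := by
    rw [Matrix.transpose_sub, Matrix.transpose_map,
      Matrix.algebraMap_eq_diagonal, Matrix.diagonal_transpose]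
  rw [h, Matrix.det_transpose]

lemma mulVecT_apply {n m : ℕ} (X : Matrix (Fin n) (Fin m) ℝ) (v : Fin n → ℝ) (i : Fin m) :
    (Xᵀ *ᵥ v) i = ∑ j, X j i * v j := by
  simp [Matrix.mulVec, dotProduct, Matrix.transpose_apply, mul_comm]

/-- `L₁`-induced performance of a positive system: for Metzler `A` and nonnegative
`B, C, D`, the matrix `A` is Hurwitz with `(D - C A⁻¹ B)ᵀ 𝟏 < γ 𝟏` (equivalently,
`L₁`-induced gain less than `γ`) iff there is `p ≥ 0` with `Aᵀp + Cᵀ𝟏 < 0` and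
`Bᵀp + Dᵀ𝟏 < γ𝟏` entrywise. -/
theorem positive_system_l1_gain_iff {n m r : ℕ}
    (A : Matrix (Fin n) (Fin n) ℝ) (B : Matrix (Fin n) (Fin m) ℝ)
    (C : Matrix (Fin r) (Fin n) ℝ) (D : Matrix (Fin r) (Fin m) ℝ)
    (hA : A.Metzler) (hB : ∀ i j, 0 ≤ B i j) (hC : ∀ i j, 0 ≤ C i j)
    (hD : ∀ i j, 0 ≤ D i j) (γ : ℝ) (hγ : 0 < γ) :
    (A.Hurwitz ∧ ∀ i, ((D - C * A⁻¹ * B)ᵀ *ᵥ fun _ => (1 : ℝ)) i < γ) ↔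
    (∃ p : Fin n → ℝ, (∀ i, 0 ≤ p i) ∧
      (∀ i, (Aᵀ *ᵥ p + Cᵀ *ᵥ fun _ => (1 : ℝ)) i < 0) ∧
      (∀ i, (Bᵀ *ᵥ p + Dᵀ *ᵥ fun _ => (1 : ℝ)) i < γ)) := by
  have honr : (fun _ : Fin r => (1 : ℝ)) = (fun _ : Fin r => (1 : ℝ)) := rfl
  -- shared facts, stated as `have`-functions applicable once Hurwitz is known
  constructor
  · rintro ⟨hH, hgain⟩
    obtain ⟨hdet, hinv⟩ := metzler_hurwitz_inv_nonpos A hA hH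
    obtain ⟨E, hEdef⟩ : ∃ E, E = A⁻¹ᵀ := ⟨_, rfl⟩
    have hAE : Aᵀ * E = 1 := by
      rw [hEdef, ← Matrix.transpose_mul, Matrix.nonsing_inv_mul A hdet, Matrix.transpose_one]
    have hE : ∀ i j, E i j ≤ 0 := fun i j => hEdef ▸ hinv j i
    obtain ⟨w, hw⟩ : ∃ w, w = Cᵀ *ᵥ (fun _ : Fin r => (1:ℝ)) := ⟨_, rfl⟩
    have hw0 : ∀ j, 0 ≤ w j := by
      intro j
      rw [hw, mulVecT_apply]
      exact Finset.sum_nonneg fun l _ => by simpa using hC l j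
    have hgain_eq : ∀ i, ((D - C * A⁻¹ * B)ᵀ *ᵥ (fun _ => (1:ℝ))) i
        = (Dᵀ *ᵥ (fun _ => (1:ℝ))) i - (Bᵀ *ᵥ (E *ᵥ w)) i := by
      intro i
      have h1 : (C * A⁻¹ * B)ᵀ = Bᵀ * (E * Cᵀ) := by
        rw [Matrix.transpose_mul, Matrix.transpose_mul, ← hEdef]
      rw [Matrix.transpose_sub, Matrix.sub_mulVec, h1, ← Matrix.mulVec_mulVec,
        ← Matrix.mulVec_mulVec, ← hw]
      simp
    obtain ⟨u, hu⟩ : ∃ u : Fin m → ℝ,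
        u = fun i => -((Bᵀ *ᵥ (E *ᵥ (fun _ : Fin n => (1:ℝ)))) i) := ⟨_, rfl⟩
    have hEonn : ∀ j, (E *ᵥ (fun _ => (1:ℝ))) j ≤ 0 := by
      intro j
      rw [Matrix.mulVec]
      exact Finset.sum_nonpos fun l _ => by simpa using hE j l
    have hu0 : ∀ i, 0 ≤ u i := by
      intro i
      rw [hu]
      simp only [neg_nonneg]
      rw [mulVecT_apply]
      exact Finset.sum_nonpos fun j _ => mul_nonpos_iff.2 (Or.inl ⟨hB j i, hEonn j⟩)
    -- choose ε
    obtain ⟨g, hg⟩ : ∃ g : Fin m → ℝ,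
        g = fun i => ((D - C * A⁻¹ * B)ᵀ *ᵥ (fun _ : Fin r => (1:ℝ))) i := ⟨_, rfl⟩
    have hgγ : ∀ i, g i < γ := fun i => hg ▸ hgain i
    set S : Finset ℝ := insert 1 (Finset.image (fun i => (γ - g i)/(u i + 1)) Finset.univ)
      with hS
    have hSne : S.Nonempty := ⟨1, Finset.mem_insert_self _ _⟩
    set ε : ℝ := S.min' hSne with hε
    have hSpos : ∀ x ∈ S, 0 < x := by
      intro x hx
      rw [hS, Finset.mem_insert] at hx
      rcases hx with rfl | hx
      · norm_num
      · obtain ⟨i, -, rfl⟩ := Finset.mem_image.1 hx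
        have hgi := hgγ i
        have hui := hu0 i
        exact div_pos (by linarith) (by linarith)
    have hε0 : 0 < ε := hSpos _ (S.min'_mem hSne)
    have hεle : ∀ i, ε ≤ (γ - g i)/(u i + 1) := fun i =>
      S.min'_le _ (Finset.mem_insert_of_mem (Finset.mem_image_of_mem _ (Finset.mem_univ i)))
    -- the vector p
    obtain ⟨v, hv⟩ : ∃ v : Fin n → ℝ, v = fun j => w j + ε := ⟨_, rfl⟩
    refine ⟨fun j => -((E *ᵥ v) j), ?_, ?_, ?_⟩
    · intro j
      rw [neg_nonneg, Matrix.mulVec]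
      refine Finset.sum_nonpos fun l _ => mul_nonpos_iff.2 (Or.inr ⟨hE j l, ?_⟩)
      rw [hv]
      have := hw0 l
      dsimp only
      linarith
    · intro i
      have h2 : Aᵀ *ᵥ (fun j => -((E *ᵥ v) j)) = -v := by
        have : (fun j => -((E *ᵥ v) j)) = -(E *ᵥ v) := rfl
        rw [this, Matrix.mulVec_neg, Matrix.mulVec_mulVec, hAE, Matrix.one_mulVec]
      rw [Pi.add_apply, h2, ← hw]
      simp only [Pi.neg_apply, hv]
      linarith
    · intro i
      have hEv : E *ᵥ v = E *ᵥ w + ε • (E *ᵥ (fun _ => (1:ℝ))) := by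
        have : v = w + ε • (fun _ : Fin n => (1:ℝ)) := by
          funext j; simp [hv]
        rw [this, Matrix.mulVec_add, Matrix.mulVec_smul]
      have h3 : (fun j => -((E *ᵥ v) j)) = -(E *ᵥ w) - ε • (E *ᵥ (fun _ => (1:ℝ))) := by
        funext j; rw [hEv]; simp; ring
      rw [Pi.add_apply, h3]
      have h4 : Bᵀ *ᵥ (-(E *ᵥ w) - ε • (E *ᵥ fun _ => (1:ℝ)))
          = -(Bᵀ *ᵥ (E *ᵥ w)) - ε • (Bᵀ *ᵥ (E *ᵥ fun _ => (1:ℝ))) := by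
        rw [Matrix.mulVec_sub, Matrix.mulVec_neg, Matrix.mulVec_smul]
      rw [h4]
      have h5 : ε * (u i + 1) ≤ γ - g i := by
        have := hεle i
        rw [le_div_iff₀ (by have := hu0 i; linarith)] at this
        linarith
      have h6 : g i = (Dᵀ *ᵥ (fun _ => (1:ℝ))) i - (Bᵀ *ᵥ (E *ᵥ w)) i := by
        rw [hg]; exact hgain_eq i
      have h7 : u i = -((Bᵀ *ᵥ (E *ᵥ (fun _ => (1:ℝ)))) i) := by rw [hu]
      simp only [Pi.sub_apply, Pi.neg_apply, Pi.smul_apply, smul_eq_mul]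
      have := hu0 i
      nlinarith [hε0]
  · rintro ⟨p, hp0, h2, h3⟩
    -- p is strictly positive
    have hAp : ∀ i, (Aᵀ *ᵥ p) i < 0 := by
      intro i
      have hCnn : 0 ≤ (Cᵀ *ᵥ (fun _ => (1:ℝ))) i := by
        rw [mulVecT_apply]
        exact Finset.sum_nonneg fun l _ => by simpa using hC l i
      have := h2 i
      rw [Pi.add_apply] at this
      linarith
    have hppos : ∀ i, 0 < p i := by
      intro i
      rcases (hp0 i).lt_or_eq with h | h
      · exact h
      · exfalso
        have h8 := hAp i
        rw [mulVecT_apply] at h8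
        have h9 : (0:ℝ) ≤ ∑ j, A j i * p j := by
          refine Finset.sum_nonneg fun j _ => ?_
          rcases eq_or_ne j i with rfl | hji
          · rw [← h]; ring_nf; simp [← h]
          · exact mul_nonneg (hA j i hji) (hp0 j)
        linarith
    -- A is Hurwitz
    have hHT := metzler_hurwitz_of_mulVec_neg Aᵀ
      (fun i j hij => hA j i (Ne.symm hij)) p hppos hAp
    have hH : A.Hurwitz := by
      intro μ hμ
      exact hHT μ (by rwa [spectrum_transpose_eq])
    obtain ⟨hdet, hinv⟩ := metzler_hurwitz_inv_nonpos A hA hH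
    refine ⟨hH, ?_⟩
    obtain ⟨E, hEdef⟩ : ∃ E, E = A⁻¹ᵀ := ⟨_, rfl⟩
    have hAE : Aᵀ * E = 1 := by
      rw [hEdef, ← Matrix.transpose_mul, Matrix.nonsing_inv_mul A hdet, Matrix.transpose_one]
    have hEA : E * Aᵀ = 1 := by
      rw [hEdef, ← Matrix.transpose_mul, Matrix.mul_nonsing_inv A hdet, Matrix.transpose_one]
    have hE : ∀ i j, E i j ≤ 0 := fun i j => hEdef ▸ hinv j i
    obtain ⟨w, hw⟩ : ∃ w, w = Cᵀ *ᵥ (fun _ : Fin r => (1:ℝ)) := ⟨_, rfl⟩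
    have hgain_eq : ∀ i, ((D - C * A⁻¹ * B)ᵀ *ᵥ (fun _ => (1:ℝ))) i
        = (Dᵀ *ᵥ (fun _ => (1:ℝ))) i - (Bᵀ *ᵥ (E *ᵥ w)) i := by
      intro i
      have h1 : (C * A⁻¹ * B)ᵀ = Bᵀ * (E * Cᵀ) := by
        rw [Matrix.transpose_mul, Matrix.transpose_mul, ← hEdef]
      rw [Matrix.transpose_sub, Matrix.sub_mulVec, h1, ← Matrix.mulVec_mulVec,
        ← Matrix.mulVec_mulVec, ← hw]
      simp
    -- the vector p + E *ᵥ w is nonneg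
    have h4 : ∀ k, (Aᵀ *ᵥ (p + E *ᵥ w)) k < 0 := by
      intro k
      rw [Matrix.mulVec_add, Matrix.mulVec_mulVec, hAE, Matrix.one_mulVec, hw]
      exact h2 k
    have hq : ∀ j, -(p j) ≤ (E *ᵥ w) j := by
      intro j
      have h5 : p + E *ᵥ w = E *ᵥ (Aᵀ *ᵥ (p + E *ᵥ w)) := by
        rw [Matrix.mulVec_mulVec, hEA, Matrix.one_mulVec]
      have h6 : 0 ≤ (p + E *ᵥ w) j := by
        rw [h5, Matrix.mulVec]
        refine Finset.sum_nonneg fun k _ => ?_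
        have := mul_nonneg (neg_nonneg.2 (hE j k)) (neg_nonneg.2 (h4 k).le)
        rwa [neg_mul_neg] at this
      rw [Pi.add_apply] at h6
      linarith
    intro i
    rw [hgain_eq i]
    have h7 : -((Bᵀ *ᵥ p) i) ≤ (Bᵀ *ᵥ (E *ᵥ w)) i := by
      rw [mulVecT_apply, mulVecT_apply, ← Finset.sum_neg_distrib]
      refine Finset.sum_le_sum fun j _ => ?_
      rw [← mul_neg]
      exact mul_le_mul_of_nonneg_left (hq j) (hB j i)
    have h8 := h3 i
    rw [Pi.add_apply] at h8
    linarith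
end
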